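/- arXiv:1110.3939 — 5 statements merged into one kernel-verified Lean document; each statement's English description precedes it below -/
import Mathlib

section
/- Let R = (R_1, …, R_n) be a preference profile over a finite candidate set C that is single-peaked with respect to a linear order >, and let D be a clone set for R with |D| ≥ 2. Then C can be partitioned into pairwise disjoint sets A_1, A_2, D_1, D_2, and P such that C \ D = A_1 ∪ P ∪ A_2, D = D_1 ∪ D_2, D_1 ≠ ∅, D_2 ≠ ∅, and A_1 > D_1 > P > D_2 > A_2 (every element of an earlier set is >-greater than every element of a later set). Furthermore, if P ≠ ∅, then peak(R) ⊆ P and, for each voter i, P ≻_i D and D ≻_i A_1 ∪ A_2. -/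
variable {α : Type*}

/-- `r` is a strict linear order (complete, transitive, antisymmetric) on the set `C`. -/
def IsLinOn (C : Set α) (r : α → α → Prop) : Prop :=
  (∀ a ∈ C, ¬r a a) ∧
    (∀ a ∈ C, ∀ b ∈ C, ∀ c ∈ C, r a b → r b c → r a c) ∧
      ∀ a ∈ C, ∀ b ∈ C, a ≠ b → r a b ∨ r b a

/-- A preference profile over `C`: a (nonempty) finite tuple of linear orders on `C`. -/
def IsProfile (C : Set α) {n : ℕ} (R : Fin n → α → α → Prop) : Prop :=
  0 < n ∧ ∀ i, IsLinOn C (R i)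

/-- `X` is a clone set for the profile `R` over `C`. -/
def IsCloneSet (C : Set α) {n : ℕ} (R : Fin n → α → α → Prop) (X : Set α) : Prop :=
  X.Nonempty ∧ X ⊆ C ∧
    ∀ c ∈ X, ∀ c' ∈ X, ∀ a ∈ C \ X, ∀ i, (R i c a ↔ R i c' a)

/-- The clone structure of `R`: the family of all clone sets. -/
def cloneSets (C : Set α) {n : ℕ} (R : Fin n → α → α → Prop) : Set (Set α) :=
  {X | IsCloneSet C R X}

/-- `X` and `Y` intersect non-trivially. -/
def Bowtie (X Y : Set α) : Prop :=
  (X ∩ Y).Nonempty ∧ (X \ Y).Nonempty ∧ (Y \ X).Nonempty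

/-- `r` is compatible with the societal axis `ax` on `C`. -/
def AxisCompatible (C : Set α) (ax r : α → α → Prop) : Prop :=
  ∀ c ∈ C, ∀ d ∈ C, ∀ e ∈ C, ((ax c d ∧ ax d e) ∨ (ax e d ∧ ax d c)) → r c d → r d e

/-- The profile `R` is single-peaked with respect to the societal axis `ax`. -/
def SinglePeakedWrt (C : Set α) {n : ℕ} (R : Fin n → α → α → Prop)
    (ax : α → α → Prop) : Prop :=
  IsLinOn C ax ∧ ∀ i, AxisCompatible C ax (R i)

/-- The profile `R` is single-peaked. -/
def SinglePeaked (C : Set α) {n : ℕ} (R : Fin n → α → α → Prop) : Prop :=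
  ∃ ax, SinglePeakedWrt C R ax

/-- `p` is the top-ranked candidate of the order `r` on `C`. -/
def IsPeakOf (C : Set α) (r : α → α → Prop) (p : α) : Prop :=
  p ∈ C ∧ ∀ a ∈ C, a ≠ p → r p a

/-- The set of peaks of the profile `R`. -/
def peakSet (C : Set α) {n : ℕ} (R : Fin n → α → α → Prop) : Set α :=
  {p | ∃ i, IsPeakOf C (R i) p}

/-- Every element of `X` is `r`-related to every element of `Y`. -/
def SetGT (r : α → α → Prop) (X Y : Set α) : Prop := ∀ x ∈ X, ∀ y ∈ Y, r x y

private lemma pw5 {β : Type*} {r : Set β → Set β → Prop} {a b c d e : Set β}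
    (hab : r a b) (hac : r a c) (had : r a d) (hae : r a e)
    (hbc : r b c) (hbd : r b d) (hbe : r b e)
    (hcd : r c d) (hce : r c e) (hde : r d e) :
    List.Pairwise r [a, b, c, d, e] := by
  simp_all [List.pairwise_cons]

theorem clone_partition_single_peaked (C : Set α) (hC : C.Finite) {n : ℕ}
    (R : Fin n → α → α → Prop) (hR : IsProfile C R)
    (gt : α → α → Prop) (hsp : SinglePeakedWrt C R gt)
    (D : Set α) (hD : IsCloneSet C R D) (hcard : 2 ≤ D.ncard) :
    ∃ A₁ A₂ D₁ D₂ P : Set α,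
      List.Pairwise Disjoint [A₁, D₁, P, D₂, A₂] ∧
      A₁ ∪ P ∪ A₂ = C \ D ∧ D₁ ∪ D₂ = D ∧ D₁.Nonempty ∧ D₂.Nonempty ∧
      List.Pairwise (SetGT gt) [A₁, D₁, P, D₂, A₂] ∧
      (P.Nonempty →
        peakSet C R ⊆ P ∧ ∀ i, SetGT (R i) P D ∧ SetGT (R i) D (A₁ ∪ A₂)) := by
  classical
  obtain ⟨hn, hlin⟩ := hR
  obtain ⟨⟨axIrr, axTrans, axTot⟩, hcompat⟩ := hsp
  obtain ⟨hDne, hDC, hclone⟩ := hD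
  -- basic helpers
  have hR_anti : ∀ i, ∀ a ∈ C, ∀ b ∈ C, R i a b → R i b a → False := fun i a ha b hb h1 h2 =>
    (hlin i).1 a ha ((hlin i).2.1 a ha b hb a ha h1 h2)
  have hgt_anti : ∀ a ∈ C, ∀ b ∈ C, gt a b → gt b a → False := fun a ha b hb h1 h2 =>
    axIrr a ha (axTrans a ha b hb a ha h1 h2)
  have hgtt : ∀ {a b c : α}, a ∈ C → b ∈ C → c ∈ C → gt a b → gt b c → gt a c :=
    fun {a b c} ha hb hc => axTrans a ha b hb c hc
  have hBne : ∀ x, x ∈ C \ D → ∀ d ∈ D, x ≠ d := fun x hx d hd h => hx.2 (by rw [h]; exact hd)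
  -- the three outer sets
  set A₁ : Set α := {a | a ∈ C \ D ∧ ∀ d ∈ D, gt a d} with hA1def
  set A₂ : Set α := {a | a ∈ C \ D ∧ ∀ d ∈ D, gt d a} with hA2def
  set P : Set α := {a | a ∈ C \ D ∧ (∃ d ∈ D, gt d a) ∧ (∃ d ∈ D, gt a d)} with hPdef
  have hA1C : A₁ ⊆ C := fun a ha => ha.1.1
  have hA2C : A₂ ⊆ C := fun a ha => ha.1.1
  have hPC : P ⊆ C := fun a ha => ha.1.1
  -- every element of P beats every element of D for every voter
  have hPbeats : ∀ i, ∀ p ∈ P, ∀ d ∈ D, R i p d := by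
    intro i p hp d hd
    obtain ⟨hpB, ⟨d1, hd1, hg1⟩, ⟨d2, hd2, hg2⟩⟩ := hp
    have hpC : p ∈ C := hpB.1
    have hnd1 : ¬ R i d1 p := by
      intro h
      have h2 : R i p d2 :=
        hcompat i d1 (hDC hd1) p hpC d2 (hDC hd2) (Or.inl ⟨hg1, hg2⟩) h
      have h3 : R i d2 p := (hclone d1 hd1 d2 hd2 p hpB i).mp h
      exact hR_anti i p hpC d2 (hDC hd2) h2 h3
    have hnd : ¬ R i d p := fun h => hnd1 ((hclone d hd d1 hd1 p hpB i).mp h)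
    rcases (hlin i).2.2 p hpC d (hDC hd) (hBne p hpB d hd) with h | h
    · exact h
    · exact absurd h hnd
  have i0 : Fin n := ⟨0, hn⟩
  -- no element of D lies strictly between two elements of P
  have hbetween : ∀ p ∈ P, ∀ p' ∈ P, ∀ d ∈ D, gt p d → gt d p' → False := by
    intro p hp p' hp' d hd h1 h2
    have hpd : R i0 p d := hPbeats i0 p hp d hd
    have hp'd : R i0 p' d := hPbeats i0 p' hp' d hd
    have h3 : R i0 d p' :=
      hcompat i0 p (hPC hp) d (hDC hd) p' (hPC hp') (Or.inl ⟨h1, h2⟩) hpd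
    exact hR_anti i0 p' (hPC hp') d (hDC hd) hp'd h3
  -- set-level comparison facts
  have hA1D : SetGT gt A₁ D := fun a ha d hd => ha.2 d hd
  have hDA2 : SetGT gt D A₂ := fun d hd a ha => ha.2 d hd
  have hA1P : SetGT gt A₁ P := by
    intro a ha p hp
    obtain ⟨d, hd, hg⟩ := hp.2.1
    exact hgtt ha.1.1 (hDC hd) (hPC hp) (ha.2 d hd) hg
  have hPA2 : SetGT gt P A₂ := by
    intro p hp a ha
    obtain ⟨d, hd, hg⟩ := hp.2.2
    exact hgtt (hPC hp) (hDC hd) ha.1.1 hg (ha.2 d hd)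
  have hA1A2 : SetGT gt A₁ A₂ := by
    intro a ha b hb
    obtain ⟨d0, hd0⟩ := hDne
    exact hgtt ha.1.1 (hDC hd0) hb.1.1 (ha.2 d0 hd0) (hb.2 d0 hd0)
  have hdisj : ∀ X Y : Set α, X ⊆ C → SetGT gt X Y → Disjoint X Y := by
    intro X Y hXC h
    rw [Set.disjoint_left]
    intro x hx hy
    exact axIrr x (hXC hx) (h x hx x hy)
  -- the union of the outer sets
  have hunion : A₁ ∪ P ∪ A₂ = C \ D := by
    apply Set.Subset.antisymm
    · rintro a ha
      simp only [Set.mem_union] at ha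
      rcases ha with (ha | ha) | ha
      · exact ha.1
      · exact ha.1
      · exact ha.1
    · intro a ha
      simp only [Set.mem_union]
      by_cases h1 : ∀ d ∈ D, gt a d
      · exact Or.inl (Or.inl ⟨ha, h1⟩)
      by_cases h2 : ∀ d ∈ D, gt d a
      · exact Or.inr ⟨ha, h2⟩
      push_neg at h1 h2
      obtain ⟨d1, hd1, hn1⟩ := h1
      obtain ⟨d2, hd2, hn2⟩ := h2
      have hg1 : gt d1 a := by
        rcases axTot a ha.1 d1 (hDC hd1) (hBne a ha d1 hd1) with h | h
        · exact absurd h hn1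
        · exact h
      have hg2 : gt a d2 := by
        rcases axTot a ha.1 d2 (hDC hd2) (hBne a ha d2 hd2) with h | h
        · exact h
        · exact absurd h hn2
      exact Or.inl (Or.inr ⟨ha, ⟨d1, hd1, hg1⟩, ⟨d2, hd2, hg2⟩⟩)
  -- the "furthermore" clause
  have hfurther : P.Nonempty →
      peakSet C R ⊆ P ∧ ∀ i, SetGT (R i) P D ∧ SetGT (R i) D (A₁ ∪ A₂) := by
    rintro ⟨p0, hp0⟩
    have hp0' := hp0
    obtain ⟨hp0B, ⟨d1, hd1, hg1⟩, ⟨d2, hd2, hg2⟩⟩ := hp0'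
    constructor
    · rintro q ⟨i, hqC, hq⟩
      by_contra hqP
      by_cases hqD : q ∈ D
      · have h1 : R i q p0 := hq p0 hp0B.1 (hBne p0 hp0B q hqD)
        exact hR_anti i p0 hp0B.1 q hqC (hPbeats i p0 hp0 q hqD) h1
      · have hqB : q ∈ C \ D := ⟨hqC, hqD⟩
        have hnot : ¬((∃ d ∈ D, gt d q) ∧ (∃ d ∈ D, gt q d)) := fun h => hqP ⟨hqB, h⟩
        rcases not_and_or.mp hnot with h | h
        · push_neg at h
          have hqd1 : gt q d1 := by
            rcases axTot q hqC d1 (hDC hd1) (hBne q hqB d1 hd1) with hh | hh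
            · exact hh
            · exact absurd hh (h d1 hd1)
          have h2 : R i d1 p0 :=
            hcompat i q hqC d1 (hDC hd1) p0 hp0B.1 (Or.inl ⟨hqd1, hg1⟩)
              (hq d1 (hDC hd1) fun he => hqD (by rw [← he]; exact hd1))
          exact hR_anti i p0 hp0B.1 d1 (hDC hd1) (hPbeats i p0 hp0 d1 hd1) h2
        · push_neg at h
          have hd2q : gt d2 q := by
            rcases axTot q hqC d2 (hDC hd2) (hBne q hqB d2 hd2) with hh | hh
            · exact absurd hh (h d2 hd2)
            · exact hh
          have h2 : R i d2 p0 :=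
            hcompat i q hqC d2 (hDC hd2) p0 hp0B.1 (Or.inr ⟨hg2, hd2q⟩)
              (hq d2 (hDC hd2) fun he => hqD (by rw [← he]; exact hd2))
          exact hR_anti i p0 hp0B.1 d2 (hDC hd2) (hPbeats i p0 hp0 d2 hd2) h2
    · intro i
      refine ⟨hPbeats i, ?_⟩
      rintro d hd a ha
      rcases ha with ha | ha
      · have h1 : R i d1 a :=
          hcompat i p0 hp0B.1 d1 (hDC hd1) a ha.1.1 (Or.inr ⟨ha.2 d1 hd1, hg1⟩)
            (hPbeats i p0 hp0 d1 hd1)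
        exact (hclone d1 hd1 d hd a ha.1 i).mp h1
      · have h1 : R i d2 a :=
          hcompat i p0 hp0B.1 d2 (hDC hd2) a ha.1.1 (Or.inl ⟨hg2, ha.2 d2 hd2⟩)
            (hPbeats i p0 hp0 d2 hd2)
        exact (hclone d2 hd2 d hd a ha.1 i).mp h1
  -- construct the split of D
  obtain ⟨D₁, D₂, hD1sub, hD2sub, hDunion, hD1ne, hD2ne, hD1P, hPD2, hD1D2⟩ :
      ∃ D₁ D₂ : Set α, D₁ ⊆ D ∧ D₂ ⊆ D ∧ D₁ ∪ D₂ = D ∧ D₁.Nonempty ∧ D₂.Nonempty ∧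
        SetGT gt D₁ P ∧ SetGT gt P D₂ ∧ SetGT gt D₁ D₂ := by
    by_cases hP : P.Nonempty
    · obtain ⟨p0, hp0⟩ := hP
      have hp0' := hp0
      obtain ⟨hp0B, ⟨d1, hd1, hg1⟩, ⟨d2, hd2, hg2⟩⟩ := hp0'
      set D₁ : Set α := {d | d ∈ D ∧ ∀ p ∈ P, gt d p} with hD1def
      have hD1s : D₁ ⊆ D := fun d hd => hd.1
      have hPD2' : ∀ p ∈ P, ∀ d, d ∈ D \ D₁ → gt p d := by
        intro p hp d hd
        have hdD : d ∈ D := hd.1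
        have h1 : ¬ ∀ p' ∈ P, gt d p' := fun h => hd.2 ⟨hdD, h⟩
        push_neg at h1
        obtain ⟨p', hp', hnp'⟩ := h1
        have hp'd : gt p' d := by
          rcases axTot p' (hPC hp') d (hDC hdD) (hBne p' hp'.1 d hdD) with h | h
          · exact h
          · exact absurd h hnp'
        by_contra hpd
        have hdp : gt d p := by
          rcases axTot p (hPC hp) d (hDC hdD) (hBne p hp.1 d hdD) with h | h
          · exact absurd h hpd
          · exact h
        exact hbetween p' hp' p hp d hdD hp'd hdp
      refine ⟨D₁, D \ D₁, hD1s, Set.diff_subset, Set.union_diff_cancel hD1s,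
        ⟨d1, hd1, ?_⟩, ⟨d2, hd2, fun h => ?_⟩, fun d hd p hp => hd.2 p hp,
        fun p hp d hd => hPD2' p hp d hd, ?_⟩
      · intro p hp
        by_contra hpd1
        have hpd : gt p d1 := by
          rcases axTot p (hPC hp) d1 (hDC hd1) (hBne p hp.1 d1 hd1) with h | h
          · exact h
          · exact absurd h hpd1
        exact hbetween p hp p0 hp0 d1 hd1 hpd hg1
      · exact hgt_anti p0 hp0B.1 d2 (hDC hd2) hg2 (h.2 p0 hp0)
      · intro x hx y hy
        exact hgtt (hDC hx.1) hp0B.1 (hDC hy.1) (hx.2 p0 hp0) (hPD2' p0 hp0 y hy)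
    · have hPe : P = ∅ := Set.not_nonempty_iff_eq_empty.mp hP
      obtain ⟨d, d', hd, hd', hne⟩ :=
        (Set.one_lt_ncard_iff (hC.subset hDC)).mp (lt_of_lt_of_le one_lt_two hcard)
      have build : ∀ x, x ∈ D → ∀ y, y ∈ D → x ≠ y → gt x y →
          ∃ D₁ D₂ : Set α, D₁ ⊆ D ∧ D₂ ⊆ D ∧ D₁ ∪ D₂ = D ∧ D₁.Nonempty ∧ D₂.Nonempty ∧
            SetGT gt D₁ P ∧ SetGT gt P D₂ ∧ SetGT gt D₁ D₂ := by
        intro x hx y hy hxy hgxy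
        set D₁ : Set α := {z | z ∈ D ∧ (gt z y ∨ z = x)} with hD1def
        have hD1s : D₁ ⊆ D := fun z hz => hz.1
        refine ⟨D₁, D \ D₁, hD1s, Set.diff_subset, Set.union_diff_cancel hD1s,
          ⟨x, hx, Or.inr rfl⟩, ⟨y, hy, fun h => ?_⟩, ?_, ?_, ?_⟩
        · rcases h.2 with h' | h'
          · exact axIrr y (hDC hy) h'
          · exact hxy h'.symm
        · intro z hz p hp
          rw [hPe] at hp
          exact absurd hp (Set.notMem_empty p)
        · intro p hp
          rw [hPe] at hp
          exact absurd hp (Set.notMem_empty p)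
        · intro z hz w hw
          have hwD : w ∈ D := hw.1
          have hnw : ¬(gt w y ∨ w = x) := fun h => hw.2 ⟨hwD, h⟩
          push_neg at hnw
          have hzy : gt z y := by
            rcases hz.2 with h' | h'
            · exact h'
            · rw [h']; exact hgxy
          by_cases hwy : w = y
          · rw [hwy]; exact hzy
          · have hyw : gt y w := by
              rcases axTot y (hDC hy) w (hDC hwD) (Ne.symm hwy) with h' | h'
              · exact h'
              · exact absurd h' hnw.1
            exact hgtt (hDC hz.1) (hDC hy) (hDC hwD) hzy hyw
      rcases axTot d (hDC hd) d' (hDC hd') hne with h | h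
      · exact build d hd d' hd' hne h
      · exact build d' hd' d hd (Ne.symm hne) h
  -- assemble everything
  have hD1C : D₁ ⊆ C := fun d hd => hDC (hD1sub hd)
  have hD2C : D₂ ⊆ C := fun d hd => hDC (hD2sub hd)
  have gA1D1 : SetGT gt A₁ D₁ := fun a ha d hd => hA1D a ha d (hD1sub hd)
  have gA1D2 : SetGT gt A₁ D₂ := fun a ha d hd => hA1D a ha d (hD2sub hd)
  have gD1A2 : SetGT gt D₁ A₂ := fun d hd a ha => hDA2 d (hD1sub hd) a ha
  have gD2A2 : SetGT gt D₂ A₂ := fun d hd a ha => hDA2 d (hD2sub hd) a ha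
  refine ⟨A₁, A₂, D₁, D₂, P, ?_, hunion, hDunion, hD1ne, hD2ne, ?_, hfurther⟩
  · exact pw5 (hdisj _ _ hA1C gA1D1) (hdisj _ _ hA1C hA1P) (hdisj _ _ hA1C gA1D2)
      (hdisj _ _ hA1C hA1A2) (hdisj _ _ hD1C hD1P) (hdisj _ _ hD1C hD1D2)
      (hdisj _ _ hD1C gD1A2) (hdisj _ _ hPC hPD2) (hdisj _ _ hPC hPA2)
      (hdisj _ _ hD2C gD2A2)
  · exact pw5 gA1D1 hA1P gA1D2 hA1A2 hD1P hD1D2 gD1A2 hPD2 hPA2 gD2A2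
end

section
/- Let R be a preference profile over a finite candidate set C that is single-peaked with respect to a societal axis >, and let D be a clone set for R that is of the second type with respect to >, i.e., the members of D do not appear contiguously in >. Then D contains no peaks of R: D ∩ peak(R) = ∅. -/
variable {α : Type*}

/-- `D` appears contiguously in the axis `gt` (a clone set of the first type). -/
def ContiguousIn (C : Set α) (gt : α → α → Prop) (D : Set α) : Prop :=
  ¬∃ a ∈ C \ D, ∃ d ∈ D, ∃ d' ∈ D, gt d a ∧ gt a d'

theorem second_type_clone_no_peaks (C : Set α) (hC : C.Finite) {n : ℕ}
    (R : Fin n → α → α → Prop) (hR : IsProfile C R)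
    (gt : α → α → Prop) (hsp : SinglePeakedWrt C R gt)
    (D : Set α) (hD : IsCloneSet C R D) (hsecond : ¬ContiguousIn C gt D) :
    D ∩ peakSet C R = ∅ := by
  ext p
  simp only [Set.mem_inter_iff, Set.mem_empty_iff_false, iff_false, not_and]
  rintro hpD ⟨i, hpC, hpeak⟩
  rw [ContiguousIn, not_not] at hsecond
  obtain ⟨a, haCD, d, hdD, d', hd'D, hda, had'⟩ := hsecond
  obtain ⟨hDne, hDC, hclone⟩ := hD
  have haC : a ∈ C := haCD.1
  have haD : a ∉ D := haCD.2
  have hdC : d ∈ C := hDC hdD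
  have hd'C : d' ∈ C := hDC hd'D
  have hap : a ≠ p := fun h => haD (h ▸ hpD)
  have hpa : R i p a := hpeak a haC hap
  have hda' : R i d a := (hclone p hpD d hdD a haCD i).mp hpa
  have hd'a : R i d' a := (hclone p hpD d' hd'D a haCD i).mp hpa
  have had : R i a d' := (hsp.2 i) d hdC a haC d' hd'C (Or.inl ⟨hda, had'⟩) hda'
  obtain ⟨hirr, htrans, _⟩ := (hR.2 i)
  exact hirr a haC (htrans a haC d' hd'C a haC had hd'a)
end

section
/- Let R be a preference profile over a finite candidate set C that is single-peaked with respect to a societal axis >, and let D be a clone set for R with |D| ≥ 2 that is of the first type with respect to > (the members of D appear contiguously in >) and satisfies D ∩ peak(R) = ∅. Then the family {X ∈ 𝒞(R) : X ⊆ D} is a string of sausages over D; specifically, it equals the family of all nonempty intervals of D with respect to the restriction of > to D. -/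
variable {α : Type*}

/-- `𝓕` is a string of sausages over `F`: the family of all intervals of some
enumeration of `F`. -/
def IsStringOfSausages (F : Set α) (𝓕 : Set (Set α)) : Prop :=
  ∃ (m : ℕ) (f : Fin m → α), Function.Injective f ∧ Set.range f = F ∧
    𝓕 = {S | ∃ i j : Fin m, i ≤ j ∧ S = f '' Set.Icc i j}

/-- `𝓕` is a fat sausage over `F`: the whole set together with all singletons. -/
def IsFatSausage (F : Set α) (𝓕 : Set (Set α)) : Prop :=
  𝓕 = ({F} : Set (Set α)) ∪ {S | ∃ x ∈ F, S = ({x} : Set α)}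

lemma IsLinOn.asymm {C : Set α} {r : α → α → Prop} (h : IsLinOn C r)
    {a b : α} (ha : a ∈ C) (hb : b ∈ C) (hab : r a b) : ¬ r b a := fun hba =>
  h.1 a ha (h.2.1 a ha b hb a ha hab hba)

lemma exists_top_finset (C : Set α) (r : α → α → Prop) (hr : IsLinOn C r) :
    ∀ s : Finset α, ↑s ⊆ C → s.Nonempty → ∃ p ∈ s, ∀ a ∈ s, a ≠ p → r p a := by
  classical
  intro s
  induction s using Finset.induction_on with
  | empty => intro _ h; exact absurd h (by simp)
  | @insert x s hx ih =>
    intro hsub _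
    have hxC : x ∈ C := hsub (by simp)
    have hsC : ↑s ⊆ C := fun a ha => hsub (by simp [ha])
    rcases s.eq_empty_or_nonempty with rfl | hne
    · refine ⟨x, by simp, fun a ha hax => ?_⟩
      rcases Finset.mem_insert.1 ha with rfl | h
      · exact absurd rfl hax
      · exact absurd h (Finset.notMem_empty a)
    · obtain ⟨p, hp, hmax⟩ := ih hsC hne
      have hpC : p ∈ C := hsC hp
      have hxp : x ≠ p := fun h => hx (h ▸ hp)
      rcases hr.2.2 x hxC p hpC hxp with h | h
      · refine ⟨x, by simp, fun a ha hax => ?_⟩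
        rcases Finset.mem_insert.1 ha with rfl | ha'
        · exact absurd rfl hax
        · have haC : a ∈ C := hsC ha'
          by_cases hap : a = p
          · exact hap ▸ h
          · exact hr.2.1 x hxC p hpC a haC h (hmax a ha' hap)
      · refine ⟨p, by simp [hp], fun a ha hap => ?_⟩
        rcases Finset.mem_insert.1 ha with rfl | ha'
        · exact h
        · exact hmax a ha' hap

lemma exists_sorted_list (C : Set α) (gt : α → α → Prop) (hg : IsLinOn C gt) :
    ∀ s : Finset α, ↑s ⊆ C →
      ∃ l : List α, l.Nodup ∧ (∀ a, a ∈ l ↔ a ∈ s) ∧ l.Pairwise gt := by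
  classical
  intro s
  induction s using Finset.strongInduction with
  | _ s ih =>
    intro hsub
    rcases s.eq_empty_or_nonempty with rfl | hne
    · exact ⟨[], by simp, by simp, by simp⟩
    · obtain ⟨p, hp, hmax⟩ := exists_top_finset C gt hg s hsub hne
      obtain ⟨l, hnd, hto, hpw⟩ := ih (s.erase p) (Finset.erase_ssubset hp)
        (fun a ha => hsub (Finset.erase_subset _ _ ha))
      have hpl : p ∉ l := fun hmem => (Finset.notMem_erase p s) ((hto p).1 hmem)
      refine ⟨p :: l, List.nodup_cons.2 ⟨hpl, hnd⟩, fun a => ?_, ?_⟩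
      · simp only [List.mem_cons, hto, Finset.mem_erase]
        constructor
        · rintro (rfl | ⟨_, h⟩); exacts [hp, h]
        · intro ha; by_cases hap : a = p
          · exact Or.inl hap
          · exact Or.inr ⟨hap, ha⟩
      · refine List.pairwise_cons.2 ⟨fun a ha => ?_, hpw⟩
        have has := (hto a).1 ha
        exact hmax a (Finset.mem_of_mem_erase has) (Finset.ne_of_mem_erase has)

theorem first_type_clone_string_of_sausages (C : Set α) (hC : C.Finite) {n : ℕ}
    (R : Fin n → α → α → Prop) (hR : IsProfile C R)
    (gt : α → α → Prop) (hsp : SinglePeakedWrt C R gt)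
    (D : Set α) (hD : IsCloneSet C R D) (hcard : 2 ≤ D.ncard)
    (hfirst : ContiguousIn C gt D) (hpk : D ∩ peakSet C R = ∅) :
    IsStringOfSausages D {X ∈ cloneSets C R | X ⊆ D} ∧
      {X ∈ cloneSets C R | X ⊆ D} =
        {S | S.Nonempty ∧ S ⊆ D ∧
          ∀ x ∈ S, ∀ y ∈ S, ∀ d ∈ D, gt x d → gt d y → d ∈ S} := by
  classical
  obtain ⟨hDne, hDC, hclone⟩ := hD
  have hax := hsp.1
  have hRlin := hR.2
  -- every voter has a peak
  have hpeak : ∀ i : Fin n, ∃ p, IsPeakOf C (R i) p := by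
    intro i
    obtain ⟨d0, hd0⟩ := hDne
    obtain ⟨p, hp, hmax⟩ := exists_top_finset C (R i) (hRlin i) hC.toFinset
      (by simp) ⟨d0, hC.mem_toFinset.2 (hDC hd0)⟩
    exact ⟨p, hC.mem_toFinset.1 hp, fun a ha hap => hmax a (hC.mem_toFinset.2 ha) hap⟩
  -- every voter's order is monotone on D along the axis
  have hmono : ∀ i : Fin n,
      (∀ c ∈ D, ∀ d ∈ D, gt c d → R i c d) ∨ (∀ c ∈ D, ∀ d ∈ D, gt c d → R i d c) := by
    intro i
    obtain ⟨p, hpC, hpmax⟩ := hpeak i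
    have hpD : p ∉ D := fun hpD =>
      Set.eq_empty_iff_forall_notMem.1 hpk p ⟨hpD, ⟨i, hpC, hpmax⟩⟩
    have hside : (∀ d ∈ D, gt p d) ∨ (∀ d ∈ D, gt d p) := by
      by_cases h : ∀ d ∈ D, gt p d
      · exact Or.inl h
      · push_neg at h
        obtain ⟨d0, hd0, hnd0⟩ := h
        have hd0p : gt d0 p :=
          (hax.2.2 p hpC d0 (hDC hd0) (fun he => hpD (he ▸ hd0))).resolve_left hnd0
        refine Or.inr (fun d hd => ?_)
        by_contra hnp
        have hpd : gt p d :=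
          (hax.2.2 p hpC d (hDC hd) (fun he => hpD (he ▸ hd))).resolve_right hnp
        exact hfirst ⟨p, ⟨hpC, hpD⟩, d0, hd0, d, hd, hd0p, hpd⟩
    rcases hside with hs | hs
    · refine Or.inl (fun c hc d hd hcd => ?_)
      exact hsp.2 i p hpC c (hDC hc) d (hDC hd) (Or.inl ⟨hs c hc, hcd⟩)
        (hpmax c (hDC hc) (fun he => hpD (he ▸ hc)))
    · refine Or.inr (fun c hc d hd hcd => ?_)
      exact hsp.2 i p hpC d (hDC hd) c (hDC hc) (Or.inr ⟨hcd, hs d hd⟩)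
        (hpmax d (hDC hd) (fun he => hpD (he ▸ hd)))
  -- part 2: the family equals the family of intervals of D
  have h2 : {X ∈ cloneSets C R | X ⊆ D} =
      {S | S.Nonempty ∧ S ⊆ D ∧
        ∀ x ∈ S, ∀ y ∈ S, ∀ d ∈ D, gt x d → gt d y → d ∈ S} := by
    ext X
    simp only [Set.mem_setOf_eq, Set.mem_sep_iff, cloneSets, IsCloneSet]
    constructor
    · rintro ⟨⟨hXne, hXC, hXcl⟩, hXD⟩
      refine ⟨hXne, hXD, fun x hx y hy d hd hxd hdy => ?_⟩
      by_contra hdX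
      have i0 : Fin n := ⟨0, hR.1⟩
      have hiff := hXcl x hx y hy d ⟨hDC hd, hdX⟩ i0
      have hxD := hXD hx; have hyD := hXD hy
      rcases hmono i0 with hm | hm
      · exact (hRlin i0).asymm (hDC hd) (hDC hyD) (hm d hd y hyD hdy)
          (hiff.1 (hm x hxD d hd hxd))
      · exact (hRlin i0).asymm (hDC hd) (hDC hxD) (hm x hxD d hd hxd)
          (hiff.2 (hm d hd y hyD hdy))
    · rintro ⟨hSne, hSD, hint⟩
      refine ⟨⟨hSne, hSD.trans hDC, ?_⟩, hSD⟩
      rintro c hc c' hc' a ⟨haC, haS⟩ i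
      have hcD := hSD hc; have hc'D := hSD hc'
      by_cases haD : a ∈ D
      · have hca : (gt a c ∧ gt a c') ∨ (gt c a ∧ gt c' a) := by
          by_cases h : gt a c
          · left; refine ⟨h, ?_⟩
            by_contra h'
            have hc'a : gt c' a :=
              (hax.2.2 a haC c' (hDC hc'D) (fun he => haS (he ▸ hc'))).resolve_left h'
            exact haS (hint c' hc' c hc a haD hc'a h)
          · have hca : gt c a :=
              (hax.2.2 a haC c (hDC hcD) (fun he => haS (he ▸ hc))).resolve_left h
            right; refine ⟨hca, ?_⟩
            by_contra h'
            have hac' : gt a c' :=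
              (hax.2.2 a haC c' (hDC hc'D) (fun he => haS (he ▸ hc'))).resolve_right h'
            exact haS (hint c hc c' hc' a haD hca hac')
        rcases hmono i with hm | hm
        · rcases hca with ⟨h1, h2⟩ | ⟨h1, h2⟩
          · exact iff_of_false
              ((hRlin i).asymm haC (hDC hcD) (hm a haD c hcD h1))
              ((hRlin i).asymm haC (hDC hc'D) (hm a haD c' hc'D h2))
          · exact iff_of_true (hm c hcD a haD h1) (hm c' hc'D a haD h2)
        · rcases hca with ⟨h1, h2⟩ | ⟨h1, h2⟩
          · exact iff_of_true (hm a haD c hcD h1) (hm a haD c' hc'D h2)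
          · exact iff_of_false
              ((hRlin i).asymm haC (hDC hcD) (hm c hcD a haD h1))
              ((hRlin i).asymm haC (hDC hc'D) (hm c' hc'D a haD h2))
      · exact hclone c hcD c' hc'D a ⟨haC, haD⟩ i
  -- part 1: string of sausages
  have hDfin : D.Finite := hC.subset hDC
  obtain ⟨l, hnd, hmem, hpw⟩ := exists_sorted_list C gt hax hDfin.toFinset
    (by rw [Set.Finite.coe_toFinset]; exact hDC)
  have hmemD : ∀ a, a ∈ l ↔ a ∈ D := by
    intro a; rw [hmem a, Set.Finite.mem_toFinset]
  set m := l.length with hm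
  set f : Fin m → α := l.get with hf
  have hinj : Function.Injective f := List.nodup_iff_injective_get.1 hnd
  have hrange : Set.range f = D := by
    ext a
    rw [← hmemD a]
    constructor
    · rintro ⟨k, rfl⟩; exact l.get_mem k
    · intro h; obtain ⟨k, hk⟩ := List.mem_iff_get.1 h; exact ⟨k, hk⟩
  have hlt : ∀ i j : Fin m, i < j → gt (f i) (f j) := List.pairwise_iff_get.1 hpw
  have hfD : ∀ k : Fin m, f k ∈ D := fun k => hrange ▸ Set.mem_range_self k
  have hgtlt : ∀ i j : Fin m, gt (f i) (f j) → i < j := by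
    intro i j h
    rcases lt_trichotomy i j with hij | rfl | hij
    · exact hij
    · exact absurd h (hax.1 _ (hDC (hfD i)))
    · exact absurd h (hax.asymm (hDC (hfD j)) (hDC (hfD i)) (hlt j i hij))
  refine ⟨⟨m, f, hinj, hrange, ?_⟩, h2⟩
  rw [h2]
  ext S
  simp only [Set.mem_setOf_eq]
  constructor
  · rintro ⟨hSne, hSD, hint⟩
    have hTne : (Finset.univ.filter (fun k : Fin m => f k ∈ S)).Nonempty := by
      obtain ⟨x, hx⟩ := hSne
      have : x ∈ Set.range f := by rw [hrange]; exact hSD hx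
      obtain ⟨k, hk⟩ := this
      exact ⟨k, by simp [hk, hx]⟩
    set T := Finset.univ.filter (fun k : Fin m => f k ∈ S) with hT
    have hmemT : ∀ k, k ∈ T ↔ f k ∈ S := by intro k; simp [hT]
    refine ⟨T.min' hTne, T.max' hTne, T.min'_le _ (T.max'_mem hTne), ?_⟩
    ext a
    constructor
    · intro ha
      have : a ∈ Set.range f := by rw [hrange]; exact hSD ha
      obtain ⟨k, rfl⟩ := this
      have hkT : k ∈ T := (hmemT k).2 ha
      exact ⟨k, ⟨T.min'_le k hkT, T.le_max' k hkT⟩, rfl⟩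
    · rintro ⟨k, ⟨h1, h2⟩, rfl⟩
      by_cases hki : k = T.min' hTne
      · exact (hmemT k).1 (hki ▸ T.min'_mem hTne)
      by_cases hkj : k = T.max' hTne
      · exact (hmemT k).1 (hkj ▸ T.max'_mem hTne)
      exact hint (f (T.min' hTne)) ((hmemT _).1 (T.min'_mem hTne))
        (f (T.max' hTne)) ((hmemT _).1 (T.max'_mem hTne)) (f k) (hfD k)
        (hlt _ _ (lt_of_le_of_ne h1 (Ne.symm hki)))
        (hlt _ _ (lt_of_le_of_ne h2 hkj))
  · rintro ⟨i, j, hij, rfl⟩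
    refine ⟨⟨f i, ⟨i, ⟨le_refl i, hij⟩, rfl⟩⟩, ?_, ?_⟩
    · rintro x ⟨k, _, rfl⟩; exact hfD k
    · rintro x ⟨a, ⟨hia, haj⟩, rfl⟩ y ⟨b, ⟨hib, hbj⟩, rfl⟩ d hd h1 h2
      have : d ∈ Set.range f := by rw [hrange]; exact hd
      obtain ⟨k, rfl⟩ := this
      exact ⟨k, ⟨hia.trans (hgtlt a k h1).le, (hgtlt k b h2).le.trans hbj⟩, rfl⟩
end

section
/- Strings of sausages and fat sausages are single-peaked clone structures: for every finite candidate set C, (a) there exists a single-peaked preference profile R over C such that 𝒞(R) is a string of sausages over C, and (b) there exists a single-peaked preference profile R' over C such that 𝒞(R') is the fat sausage over C, i.e., 𝒞(R') = {C} ∪ {{c} : c ∈ C}. -/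
variable {α : Type*}

section SausageHelpers
open Set

def liftRel {m : ℕ} (f : Fin m → α) (lt : ℕ → ℕ → Prop) (x y : α) : Prop :=
  ∃ i j : Fin m, lt i.val j.val ∧ x = f i ∧ y = f j

lemma liftRel_iff {m : ℕ} {f : Fin m → α} (hf : Function.Injective f)
    {lt : ℕ → ℕ → Prop} {i j : Fin m} : liftRel f lt (f i) (f j) ↔ lt i.val j.val := by
  constructor
  · rintro ⟨i', j', h, hi, hj⟩
    rwa [hf hi, hf hj]
  · exact fun h => ⟨i, j, h, rfl, rfl⟩

lemma isLinOn_lift {m : ℕ} {f : Fin m → α} {C : Set α} (hf : Function.Injective f)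
    (hr : Set.range f = C) {lt : ℕ → ℕ → Prop}
    (h1 : ∀ i : Fin m, ¬ lt i.val i.val)
    (h2 : ∀ i j k : Fin m, lt i.val j.val → lt j.val k.val → lt i.val k.val)
    (h3 : ∀ i j : Fin m, i ≠ j → lt i.val j.val ∨ lt j.val i.val) :
    IsLinOn C (liftRel f lt) := by
  subst hr
  refine ⟨?_, ?_, ?_⟩
  · rintro a ⟨i, rfl⟩ h
    exact h1 i ((liftRel_iff hf).mp h)
  · rintro a ⟨i, rfl⟩ b ⟨j, rfl⟩ c ⟨k, rfl⟩ hab hbc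
    exact (liftRel_iff hf).mpr (h2 i j k ((liftRel_iff hf).mp hab) ((liftRel_iff hf).mp hbc))
  · rintro a ⟨i, rfl⟩ b ⟨j, rfl⟩ hab
    rcases h3 i j (fun h => hab (by rw [h])) with h | h
    · exact Or.inl ((liftRel_iff hf).mpr h)
    · exact Or.inr ((liftRel_iff hf).mpr h)

lemma axisCompatible_lift {m : ℕ} {f : Fin m → α} {C : Set α} (hf : Function.Injective f)
    (hr : Set.range f = C) {alt lt : ℕ → ℕ → Prop}
    (h : ∀ i j k : Fin m, ((alt i.val j.val ∧ alt j.val k.val) ∨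
        (alt k.val j.val ∧ alt j.val i.val)) → lt i.val j.val → lt j.val k.val) :
    AxisCompatible C (liftRel f alt) (liftRel f lt) := by
  subst hr
  rintro c ⟨i, rfl⟩ d ⟨j, rfl⟩ e ⟨k, rfl⟩ hax hcd
  refine (liftRel_iff hf).mpr (h i j k ?_ ((liftRel_iff hf).mp hcd))
  rcases hax with ⟨ha1, ha2⟩ | ⟨ha1, ha2⟩
  · exact Or.inl ⟨(liftRel_iff hf).mp ha1, (liftRel_iff hf).mp ha2⟩
  · exact Or.inr ⟨(liftRel_iff hf).mp ha1, (liftRel_iff hf).mp ha2⟩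

lemma clone_idx {m : ℕ} {f : Fin m → α} {C : Set α} (hf : Function.Injective f)
    (hr : Set.range f = C)
    {n : ℕ} {lts : Fin n → ℕ → ℕ → Prop} {X : Set α}
    (hX : IsCloneSet C (fun v => liftRel f (lts v)) X)
    {k k' l : Fin m} (hk : f k ∈ X) (hk' : f k' ∈ X) (hl : f l ∉ X) (v : Fin n) :
    lts v k.val l.val ↔ lts v k'.val l.val := by
  have := hX.2.2 _ hk _ hk' (f l) ⟨hr ▸ Set.mem_range_self l, hl⟩ v
  simpa [liftRel_iff hf] using this

lemma clone_interval {m : ℕ} {f : Fin m → α} {C : Set α} (hf : Function.Injective f)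
    (hr : Set.range f = C)
    {n : ℕ} {lts : Fin n → ℕ → ℕ → Prop} {X : Set α}
    (hX : IsCloneSet C (fun v => liftRel f (lts v)) X)
    (v0 : Fin n) (hv0 : ∀ i j : Fin m, lts v0 i.val j.val ↔ i.val < j.val) :
    ∃ a b : Fin m, a ≤ b ∧ X = f '' Set.Icc a b := by
  classical
  set I : Finset (Fin m) := Finset.univ.filter (fun i => f i ∈ X) with hI
  have hmemI : ∀ i : Fin m, i ∈ I ↔ f i ∈ X := by
    intro i; simp [hI]
  have hIne : I.Nonempty := by
    obtain ⟨x, hx⟩ := hX.1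
    obtain ⟨i, rfl⟩ := hr ▸ hX.2.1 hx
    exact ⟨i, (hmemI i).mpr hx⟩
  refine ⟨I.min' hIne, I.max' hIne, I.min'_le _ (I.max'_mem hIne), ?_⟩
  apply Set.eq_of_subset_of_subset
  · intro x hx
    obtain ⟨k, rfl⟩ := hr ▸ hX.2.1 hx
    exact ⟨k, Set.mem_Icc.mpr ⟨I.min'_le _ ((hmemI k).mpr hx), I.le_max' _ ((hmemI k).mpr hx)⟩, rfl⟩
  · rintro x ⟨l, hl, rfl⟩
    rw [Set.mem_Icc] at hl
    by_contra hlX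
    have ha : f (I.min' hIne) ∈ X := (hmemI _).mp (I.min'_mem hIne)
    have hb : f (I.max' hIne) ∈ X := (hmemI _).mp (I.max'_mem hIne)
    have key := clone_idx hf hr hX ha hb hlX v0
    rw [hv0, hv0] at key
    have h1 : l ≠ I.min' hIne := fun h => hlX (h ▸ ha)
    have h2 : l ≠ I.max' hIne := fun h => hlX (h ▸ hb)
    have v1 := Fin.val_ne_of_ne h1
    have v2 := Fin.val_ne_of_ne h2
    have l1 : (I.min' hIne).val ≤ l.val := hl.1
    have l2 : l.val ≤ (I.max' hIne).val := hl.2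
    omega

/-- The order of the voter with peak `p` (0-indexed, among `m` candidates): for
`v < m` the sweep `v, v+1, …, m-1, v-1, …, 0`; for `v ≥ m` the sweep
`v-m, v-m-1, …, 0, v-m+1, …, m-1`. -/
def bLt (m v i j : ℕ) : Prop :=
  if v < m then
    ((v ≤ i ∧ v ≤ j ∧ i < j) ∨ (v ≤ i ∧ j < v) ∨ (i < v ∧ j < v ∧ j < i))
  else
    ((i ≤ v - m ∧ j ≤ v - m ∧ j < i) ∨ (i ≤ v - m ∧ v - m < j) ∨
      (v - m < i ∧ v - m < j ∧ i < j))

lemma bLt_irrefl (m v i : ℕ) : ¬ bLt m v i i := by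
  unfold bLt; split <;> omega

lemma bLt_trans (m v i j k : ℕ) : bLt m v i j → bLt m v j k → bLt m v i k := by
  unfold bLt; split <;> omega

lemma bLt_total (m v i j : ℕ) (h : i ≠ j) : bLt m v i j ∨ bLt m v j i := by
  unfold bLt; split <;> omega

lemma bLt_compat (m v i j k : ℕ) (h : (i < j ∧ j < k) ∨ (k < j ∧ j < i)) :
    bLt m v i j → bLt m v j k := by
  unfold bLt; split <;> omega

lemma bLt_zero (m i j : ℕ) (hm : 0 < m) : bLt m 0 i j ↔ i < j := by
  unfold bLt; rw [if_pos hm]; omega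

end SausageHelpers

theorem string_and_fat_sausage_single_peaked (C : Set α) (hC : C.Finite)
    (hne : C.Nonempty) :
    (∃ (n : ℕ) (R : Fin n → α → α → Prop),
        IsProfile C R ∧ SinglePeaked C R ∧ IsStringOfSausages C (cloneSets C R)) ∧
      ∃ (n : ℕ) (R : Fin n → α → α → Prop),
        IsProfile C R ∧ SinglePeaked C R ∧
          cloneSets C R = ({C} : Set (Set α)) ∪ {S | ∃ x ∈ C, S = ({x} : Set α)} := by
  classical
  haveI := hC.fintype
  obtain ⟨m, ⟨e⟩⟩ : ∃ m, Nonempty (C ≃ Fin m) := ⟨_, ⟨Fintype.equivFin C⟩⟩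
  have hm : 0 < m := by
    have : Nonempty C := hne.to_subtype
    exact Fin.pos_iff_nonempty.mpr (this.map e)
  set f : Fin m → α := fun i => ((e.symm i : C) : α) with hfdef
  have hf : Function.Injective f := fun i j h => by
    apply e.symm.injective; exact Subtype.val_injective h
  have hr : Set.range f = C := by
    apply Set.eq_of_subset_of_subset
    · rintro x ⟨i, rfl⟩; exact (e.symm i).2
    · intro x hx; exact ⟨e ⟨x, hx⟩, by simp [hfdef]⟩
  have haxlin : IsLinOn C (liftRel f (· < ·)) :=
    isLinOn_lift hf hr (fun i => lt_irrefl _) (fun _ _ _ => Nat.lt_trans)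
      (fun i j hij => (Fin.val_ne_of_ne hij).lt_or_gt)
  constructor
  · -- string of sausages: a single voter whose order is the axis itself
    refine ⟨1, fun _ => liftRel f (· < ·), ⟨one_pos, fun _ => haxlin⟩,
      ⟨liftRel f (· < ·), haxlin, fun _ => axisCompatible_lift hf hr
        (fun i j k h hij => by omega)⟩, m, f, hf, hr, ?_⟩
    apply Set.eq_of_subset_of_subset
    · intro S hS
      obtain ⟨a, b, hab, hX⟩ := clone_interval hf hr hS 0 (fun i j => Iff.rfl)
      exact ⟨a, b, hab, hX⟩
    · rintro S ⟨i, j, hij, rfl⟩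
      refine ⟨⟨f i, ⟨i, Set.mem_Icc.mpr ⟨le_refl i, hij⟩, rfl⟩⟩, ?_, ?_⟩
      · rintro x ⟨k, _, rfl⟩; exact hr ▸ Set.mem_range_self k
      · rintro c ⟨k, hk, rfl⟩ c' ⟨k', hk', rfl⟩ a ⟨haC, haX⟩ v
        obtain ⟨l, rfl⟩ := hr ▸ haC
        have hlI : l ∉ Set.Icc i j := fun h => haX ⟨l, h, rfl⟩
        simp only [liftRel_iff hf]
        simp only [Set.mem_Icc, Fin.le_def] at hk hk' hlI
        omega
  · -- fat sausage: 2m voters, sweeps from each peak in both directions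
    refine ⟨2 * m, fun v => liftRel f (bLt m v.val), ⟨by omega, fun v =>
        isLinOn_lift hf hr (fun i => bLt_irrefl m v.val i.val)
          (fun i j k => bLt_trans m v.val i.val j.val k.val)
          (fun i j hij => bLt_total m v.val i.val j.val (Fin.val_ne_of_ne hij))⟩,
      ⟨liftRel f (· < ·), haxlin, fun v => axisCompatible_lift hf hr
        (fun i j k h => bLt_compat m v.val i.val j.val k.val h)⟩, ?_⟩
    apply Set.eq_of_subset_of_subset
    · intro S hS
      obtain ⟨a, b, hab, hX⟩ := clone_interval hf hr hS ⟨0, by omega⟩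
        (fun i j => bLt_zero m i.val j.val hm)
      have hmem : ∀ l : Fin m, f l ∈ S ↔ l ∈ Set.Icc a b := by
        intro l; rw [hX]; exact hf.mem_set_image
      rcases eq_or_lt_of_le hab with heq | hlt
      · -- singleton
        right
        refine ⟨f a, hr ▸ Set.mem_range_self a, ?_⟩
        rw [hX, ← heq, Set.Icc_self, Set.image_singleton]
      · -- must be all of C
        have hva : a.val < b.val := hlt
        have ha0 : a.val = 0 := by
          by_contra h0
          have e1 : a.val + 1 < m := by omega
          have e2 : a.val - 1 < m := by omega
          have e3 : m + a.val < 2 * m := by omega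
          have hk : f a ∈ S := (hmem a).mpr ⟨le_refl a, hab⟩
          have hk' : f (⟨a.val + 1, e1⟩ : Fin m) ∈ S := by
            rw [hmem, Set.mem_Icc]
            refine ⟨?_, ?_⟩ <;> rw [Fin.le_def] <;>
              show _ ≤ _ <;> simp only [Fin.val_mk] <;> omega
          have hl : f (⟨a.val - 1, e2⟩ : Fin m) ∉ S := by
            intro h
            have h5 := ((hmem _).mp h).1
            rw [Fin.le_def] at h5
            have h6 : (⟨a.val - 1, e2⟩ : Fin m).val = a.val - 1 := rfl
            rw [h6] at h5
            omega
          have key : bLt m (m + a.val) a.val (a.val - 1) ↔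
              bLt m (m + a.val) (a.val + 1) (a.val - 1) :=
            clone_idx hf hr hS hk hk' hl ⟨m + a.val, e3⟩
          unfold bLt at key
          have hcond : ¬ (m + a.val < m) := by omega
          simp only [if_neg hcond] at key
          omega
        have hbm : b.val = m - 1 := by
          by_contra h1
          have hb1 : b.val < m := b.isLt
          have e1 : b.val - 1 < m := by omega
          have e2 : b.val + 1 < m := by omega
          have hk : f b ∈ S := (hmem b).mpr ⟨hab, le_refl b⟩
          have hk' : f (⟨b.val - 1, e1⟩ : Fin m) ∈ S := by
            rw [hmem, Set.mem_Icc]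
            refine ⟨?_, ?_⟩ <;> rw [Fin.le_def] <;>
              show _ ≤ _ <;> simp only [Fin.val_mk] <;> omega
          have hl : f (⟨b.val + 1, e2⟩ : Fin m) ∉ S := by
            intro h
            have h5 := ((hmem _).mp h).2
            rw [Fin.le_def] at h5
            have h6 : (⟨b.val + 1, e2⟩ : Fin m).val = b.val + 1 := rfl
            rw [h6] at h5
            omega
          have e3 : b.val < 2 * m := by omega
          have key : bLt m b.val b.val (b.val + 1) ↔
              bLt m b.val (b.val - 1) (b.val + 1) :=
            clone_idx hf hr hS hk hk' hl ⟨b.val, e3⟩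
          unfold bLt at key
          have hcond : b.val < m := b.isLt
          simp only [if_pos hcond] at key
          omega
        left
        rw [Set.mem_singleton_iff, hX, ← hr]
        have : Set.Icc a b = Set.univ := by
          ext i
          simp only [Set.mem_Icc, Fin.le_def, Set.mem_univ, iff_true]
          have := i.isLt
          omega
        rw [this, Set.image_univ]
    · rintro S (hS | ⟨x, hx, rfl⟩)
      · rw [Set.mem_singleton_iff] at hS
        subst hS
        exact ⟨hne, subset_rfl, fun c _ c' _ a ha i => absurd ha.1 ha.2⟩
      · refine ⟨⟨x, rfl⟩, by simpa using hx, ?_⟩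
        rintro c hc c' hc' a ha v
        rw [Set.mem_singleton_iff] at hc hc'
        rw [hc, hc']
end

section
/- For every clone structure 𝒞 over a finite set C there exists a single-crossing preference profile R over C such that 𝒞 = 𝒞(R). -/
variable {α : Type*}

/-- `𝓒` is a clone structure over `C`. -/
def IsCloneStructure (C : Set α) (𝓒 : Set (Set α)) : Prop :=
  ∃ (n : ℕ) (R : Fin n → α → α → Prop), IsProfile C R ∧ 𝓒 = cloneSets C R

/-- The profile `R` over `C` is single-crossing: there is a linear order on the
voters such that for every pair of distinct candidates, the voters preferring
one of them all precede the voters preferring the other. -/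
def SingleCrossing (C : Set α) {n : ℕ} (R : Fin n → α → α → Prop) : Prop :=
  ∃ vlt : Fin n → Fin n → Prop, IsLinOn (Set.univ : Set (Fin n)) vlt ∧
    ∀ c ∈ C, ∀ d ∈ C, c ≠ d →
      ((∀ i j, R i c d → R j d c → vlt i j) ∨
        (∀ i j, R i d c → R j c d → vlt i j))

namespace CloneSC


/-- Hypotheses on a family of intervals `(a,b)` (meaning `[a,b] ⊆ {0,…,k-1}`). -/
structure AbsHyp (k : ℕ) (T : Set (ℕ × ℕ)) : Prop where
  wf : ∀ p ∈ T, p.1 ≤ p.2 ∧ p.2 < k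
  sing : ∀ i < k, (i,i) ∈ T
  full : (0, k-1) ∈ T
  inter : ∀ p ∈ T, ∀ q ∈ T, max p.1 q.1 ≤ min p.2 q.2 →
    (max p.1 q.1, min p.2 q.2) ∈ T
  union : ∀ p ∈ T, ∀ q ∈ T, max p.1 q.1 ≤ min p.2 q.2 →
    (min p.1 q.1, max p.2 q.2) ∈ T
  diff : ∀ p ∈ T, ∀ q ∈ T, p.1 < q.1 → q.1 ≤ p.2 → p.2 < q.2 →
    (p.1, q.1 - 1) ∈ T ∧ (p.2 + 1, q.2) ∈ T
  part : ∀ p ∈ T, p.1 < p.2 → p ≠ (0, k-1) →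
    ∃ q ∈ T, (p.1 < q.1 ∧ q.1 ≤ p.2 ∧ p.2 < q.2) ∨ (q.1 < p.1 ∧ p.1 ≤ q.2 ∧ q.2 < p.2)

variable {k : ℕ} {T : Set (ℕ × ℕ)}

/-- least element of T covering `{x, x+1}`. -/
lemma exists_least (H : AbsHyp k T) (x : ℕ) (hx : x + 1 < k) :
    ∃ m ∈ T, m.1 ≤ x ∧ x + 1 ≤ m.2 ∧
      ∀ p ∈ T, p.1 ≤ x → x + 1 ≤ p.2 → p.1 ≤ m.1 ∧ m.2 ≤ p.2 := by
  classical
  set F : Set (ℕ × ℕ) := {p ∈ T | p.1 ≤ x ∧ x + 1 ≤ p.2} with hF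
  have hfull : ((0 : ℕ), k-1) ∈ F := by
    refine ⟨H.full, by omega, by omega⟩
  have hne : {n | ∃ p ∈ F, p.2 - p.1 = n}.Nonempty := ⟨_, _, hfull, rfl⟩
  obtain ⟨p, hpF, hplen⟩ := Nat.sInf_mem hne
  obtain ⟨hpT, hp1, hp2⟩ := hpF
  refine ⟨p, hpT, hp1, hp2, ?_⟩
  intro q hq hq1 hq2
  have hle : max p.1 q.1 ≤ min p.2 q.2 := by omega
  have hi := H.inter p hpT q hq hle
  have hiF : (max p.1 q.1, min p.2 q.2) ∈ F := ⟨hi, by simp; omega, by simp; omega⟩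
  have h1 : sInf {n | ∃ p ∈ F, p.2 - p.1 = n} ≤ min p.2 q.2 - max p.1 q.1 :=
    Nat.sInf_le ⟨_, hiF, rfl⟩
  have hwfp := H.wf p hpT
  have hwfq := H.wf q hq
  constructor <;> omega

/-- If some element of `T` other than the full interval covers `{x,x+1}`,
then the pair `(x,x+1)` itself belongs to `T`. -/
lemma pair_mem (H : AbsHyp k T) (x : ℕ) (hx : x + 1 < k)
    (hcov : ∃ p ∈ T, p ≠ (0, k-1) ∧ p.1 ≤ x ∧ x + 1 ≤ p.2) :
    (x, x+1) ∈ T := by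
  classical
  obtain ⟨m, hmT, hm1, hm2, hleast⟩ := exists_least H x hx
  obtain ⟨w, hwT, hwne, hw1, hw2⟩ := hcov
  have hmw := hleast w hwT hw1 hw2
  have hwwf := H.wf w hwT
  have hmwf := H.wf m hmT
  -- m is proper
  have hmne : m ≠ (0, k-1) := by
    intro h
    apply hwne
    have : w.1 = 0 ∧ w.2 = k - 1 := by
      rw [h] at hmw; simp at hmw; omega
    exact Prod.ext this.1 this.2
  by_cases hpair : m = (x, x+1)
  · rwa [hpair] at hmT
  -- m is a nonsingleton proper element; split it at x.
  have hmlt : m.1 < m.2 := by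
    rcases Nat.lt_or_ge m.1 m.2 with h | h
    · exact h
    · exfalso; omega
  have hsplit : (m.1, x) ∈ T ∧ (x+1, m.2) ∈ T := by
    obtain ⟨q, hqT, hcr⟩ := H.part m hmT hmlt hmne
    have hqwf := H.wf q hqT
    rcases hcr with ⟨h1, h2, h3⟩ | ⟨h1, h2, h3⟩
    · -- m.1 < q.1 ≤ m.2 < q.2 : pieces (m.1, q.1-1), (q.1, m.2)
      have hd := H.diff m hmT q hqT h1 h2 h3
      have hi := H.inter m hmT q hqT (by omega)
      have hmax : max m.1 q.1 = q.1 := by omega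
      have hmin : min m.2 q.2 = m.2 := by omega
      rw [hmax, hmin] at hi
      -- the split point s := q.1 - 1 ;  prove s = x by leastness
      have hs1 : ¬ (x + 1 ≤ q.1 - 1) := by
        intro hcon
        have := hleast (m.1, q.1 - 1) hd.1 (by simp; omega) (by simpa using hcon)
        simp at this; omega
      have hs2 : ¬ (q.1 ≤ x) := by
        intro hcon
        have := hleast (q.1, m.2) hi (by simpa using hcon) (by simp; omega)
        simp at this; omega
      have hq1x : q.1 = x + 1 := by omega
      constructor
      · have := hd.1; rwa [hq1x, Nat.add_sub_cancel] at this
      · rwa [hq1x] at hi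
    · -- q.1 < m.1 ≤ q.2 < m.2 : pieces (m.1, q.2), (q.2+1, m.2)
      have hd := H.diff q hqT m hmT h1 h2 h3
      have hi := H.inter m hmT q hqT (by omega)
      have hmax : max m.1 q.1 = m.1 := by omega
      have hmin : min m.2 q.2 = q.2 := by omega
      rw [hmax, hmin] at hi
      have hs1 : ¬ (x + 1 ≤ q.2) := by
        intro hcon
        have := hleast (m.1, q.2) hi (by simp; omega) (by simpa using hcon)
        simp at this; omega
      have hs2 : ¬ (q.2 + 1 ≤ x) := by
        intro hcon
        have := hleast (q.2+1, m.2) hd.2 (by simpa using hcon) (by simp; omega)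
        simp at this; omega
      have hq2x : q.2 = x := by omega
      refine ⟨by rwa [hq2x] at hi, ?_⟩
      have hd2 := hd.2
      rwa [hq2x] at hd2
  -- show m.2 = x+1
  have hb : m.2 = x + 1 := by
    by_contra hb
    set B := ((x+1 : ℕ), m.2) with hB
    have hBT : B ∈ T := hsplit.2
    have hBlt : B.1 < B.2 := by simp [hB]; omega
    have hBne : B ≠ (0, k-1) := by
      intro h; have := congrArg Prod.fst h; simp [hB] at this
    obtain ⟨q, hqT, hcr⟩ := H.part B hBT hBlt hBne
    have hqwf := H.wf q hqT
    rcases hcr with ⟨h1, h2, h3⟩ | ⟨h1, h2, h3⟩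
    · -- stick-right: x+1 < q.1 ≤ m.2 < q.2 ⇒ (m.1, q.1 - 1) covers pair, ⊊ m
      simp [hB] at h1 h2 h3
      have hd := H.diff m hmT q hqT (by omega) (by omega) (by omega)
      have := hleast (m.1, q.1 - 1) hd.1 (by simp; omega) (by simp; omega)
      simp at this; omega
    · -- stick-left: q.1 < x+1 ≤ q.2 < m.2 ⇒ q covers pair ⇒ m ⊆ q: m.2 ≤ q.2 contra
      simp [hB] at h1 h2 h3
      have := hleast q hqT (by omega) (by omega)
      omega
  -- show m.1 = x
  have ha : m.1 = x := by
    by_contra ha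
    set A := (m.1, x) with hA
    have hAT : A ∈ T := hsplit.1
    have hAlt : A.1 < A.2 := by simp [hA]; omega
    have hAne : A ≠ (0, k-1) := by
      intro h; have := congrArg Prod.snd h; simp [hA] at this; omega
    obtain ⟨q, hqT, hcr⟩ := H.part A hAT hAlt hAne
    have hqwf := H.wf q hqT
    rcases hcr with ⟨h1, h2, h3⟩ | ⟨h1, h2, h3⟩
    · -- stick-right: m.1 < q.1 ≤ x < q.2 ⇒ q covers pair ⇒ m ⊆ q : q.1 ≤ m.1 contra
      simp [hA] at h1 h2 h3
      have := hleast q hqT (by omega) (by omega)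
      omega
    · -- stick-left: q.1 < m.1 ≤ q.2 < x ⇒ (q.2+1, m.2) ∈ T covers pair, ⊊ m
      simp [hA] at h1 h2 h3
      have hd := H.diff q hqT m hmT (by omega) (by omega) (by omega)
      have := hleast (q.2+1, m.2) hd.2 (by simp; omega) (by simp; omega)
      simp at this; omega
  have : m = (x, x+1) := Prod.ext ha hb
  exact absurd this hpair


/-- Any proper nonsingleton element splits into two adjacent pieces of `T`. -/
lemma split_elt (H : AbsHyp k T) {m : ℕ × ℕ} (hmT : m ∈ T) (hmlt : m.1 < m.2)
    (hmne : m ≠ (0, k-1)) :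
    ∃ s, m.1 ≤ s ∧ s < m.2 ∧ (m.1, s) ∈ T ∧ (s + 1, m.2) ∈ T := by
  obtain ⟨q, hqT, hcr⟩ := H.part m hmT hmlt hmne
  have hqwf := H.wf q hqT
  have hmwf := H.wf m hmT
  rcases hcr with ⟨h1, h2, h3⟩ | ⟨h1, h2, h3⟩
  · have hd := H.diff m hmT q hqT h1 h2 h3
    have hi := H.inter m hmT q hqT (by omega)
    have hmax : max m.1 q.1 = q.1 := by omega
    have hmin : min m.2 q.2 = m.2 := by omega
    rw [hmax, hmin] at hi
    exact ⟨q.1 - 1, by omega, by omega, by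
      have := hd.1; simpa using this, by
      have : q.1 - 1 + 1 = q.1 := by omega
      rw [this]; exact hi⟩
  · have hd := H.diff q hqT m hmT h1 h2 h3
    have hi := H.inter m hmT q hqT (by omega)
    have hmax : max m.1 q.1 = m.1 := by omega
    have hmin : min m.2 q.2 = q.2 := by omega
    rw [hmax, hmin] at hi
    exact ⟨q.2, by omega, by omega, hi, hd.2⟩

/-- There is some adjacent pair in `T`, provided a proper nonsingleton element exists. -/
lemma base_pair (H : AbsHyp k T) {w : ℕ × ℕ} (hwT : w ∈ T) (hwlt : w.1 < w.2)
    (hwne : w ≠ (0, k-1)) :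
    ∃ a, a + 1 < k ∧ (a, a+1) ∈ T := by
  classical
  set F : Set (ℕ × ℕ) := {p ∈ T | p.1 < p.2 ∧ p ≠ (0, k-1)} with hF
  have hne : {n | ∃ p ∈ F, p.2 - p.1 = n}.Nonempty := ⟨_, _, ⟨hwT, hwlt, hwne⟩, rfl⟩
  obtain ⟨m, hmF, hmlen⟩ := Nat.sInf_mem hne
  obtain ⟨hmT, hmlt, hmne⟩ := hmF
  have hmwf := H.wf m hmT
  obtain ⟨s, hs1, hs2, hsa, hsb⟩ := split_elt H hmT hmlt hmne
  have hwfa := H.wf _ hsa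
  have hwfb := H.wf _ hsb
  -- pieces are proper
  have hpa : ((m.1, s) : ℕ × ℕ) ≠ (0, k-1) := by
    intro h
    have h1 := congrArg Prod.fst h; have h2 := congrArg Prod.snd h
    simp at h1 h2; omega
  have hpb : ((s+1, m.2) : ℕ × ℕ) ≠ (0, k-1) := by
    intro h
    have h1 := congrArg Prod.fst h
    simp at h1
  -- pieces are singletons by minimality
  have hsing1 : m.1 = s := by
    by_contra hcon
    have : sInf {n | ∃ p ∈ F, p.2 - p.1 = n} ≤ s - m.1 :=
      Nat.sInf_le ⟨_, ⟨hsa, by simp; omega, hpa⟩, rfl⟩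
    omega
  have hsing2 : s + 1 = m.2 := by
    by_contra hcon
    have : sInf {n | ∃ p ∈ F, p.2 - p.1 = n} ≤ m.2 - (s+1) :=
      Nat.sInf_le ⟨_, ⟨hsb, by simp; omega, hpb⟩, rfl⟩
    omega
  refine ⟨m.1, by omega, ?_⟩
  have : m = (m.1, m.1 + 1) := by
    have := Prod.mk.eta (p := m); rw [← this]
    exact Prod.ext rfl (by simp; omega)
  rwa [this] at hmT

/-- Rightward propagation of adjacent pairs. -/
lemma prop_right (H : AbsHyp k T) {l : ℕ} (hl : (l, l+1) ∈ T) (hk : l + 2 < k) :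
    (l+1, l+2) ∈ T := by
  classical
  apply pair_mem H (l+1) (by omega)
  by_contra hcov
  push_neg at hcov
  -- no proper element covers {l+1, l+2}; take a maximal proper nonsingleton ⊇ (l,l+1)
  set G : Set (ℕ × ℕ) := {p ∈ T | p.1 < p.2 ∧ p ≠ (0, k-1) ∧ p.1 ≤ l ∧ l + 1 ≤ p.2} with hG
  have hPG : ((l, l+1) : ℕ × ℕ) ∈ G := by
    refine ⟨hl, by omega, ?_, by omega, by omega⟩
    intro h; have := congrArg Prod.snd h; simp at this; omega
  have hbdd : BddAbove {n | ∃ p ∈ G, p.2 - p.1 = n} := by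
    refine ⟨k, ?_⟩
    rintro n ⟨p, hp, rfl⟩
    have := H.wf p hp.1; omega
  have hGne : {n | ∃ p ∈ G, p.2 - p.1 = n}.Nonempty := ⟨_, ⟨_, hPG, rfl⟩⟩
  obtain ⟨Y, hYG, hYlen⟩ := Nat.sSup_mem hGne hbdd
  obtain ⟨hYT, hYlt, hYne, hY1, hY2⟩ := hYG
  have hYwf := H.wf Y hYT
  -- Y.2 = l+1
  have hY2e : Y.2 = l + 1 := by
    by_contra hcon
    have := hcov Y hYT hYne (by omega); omega
  obtain ⟨q, hqT, hcr⟩ := H.part Y hYT hYlt hYne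
  have hqwf := H.wf q hqT
  rcases hcr with ⟨h1, h2, h3⟩ | ⟨h1, h2, h3⟩
  · -- right-cross: union (Y.1, q.2)
    have hu := H.union Y hYT q hqT (by omega)
    have hmin : min Y.1 q.1 = Y.1 := by omega
    have hmax : max Y.2 q.2 = q.2 := by omega
    rw [hmin, hmax] at hu
    by_cases hfull : ((Y.1, q.2) : ℕ × ℕ) = (0, k-1)
    · -- then q is a proper element covering the pair
      have e1 := congrArg Prod.fst hfull; have e2 := congrArg Prod.snd hfull
      simp at e1 e2
      have := hcov q hqT (by intro h; have := congrArg Prod.fst h; simp at this; omega) (by omega)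
      omega
    · -- contradicts maximality of Y
      have : q.2 - Y.1 ≤ sSup {n | ∃ p ∈ G, p.2 - p.1 = n} :=
        le_csSup hbdd ⟨_, ⟨hu, by simp; omega, hfull, by simp; omega, by simp; omega⟩, rfl⟩
      omega
  · -- left-cross: union (q.1, Y.2) is proper, in G, longer: contradiction
    have hu := H.union Y hYT q hqT (by omega)
    have hmin : min Y.1 q.1 = q.1 := by omega
    have hmax : max Y.2 q.2 = Y.2 := by omega
    rw [hmin, hmax] at hu
    have hfull : ((q.1, Y.2) : ℕ × ℕ) ≠ (0, k-1) := by
      intro h; have := congrArg Prod.snd h; simp at this; omega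
    have : Y.2 - q.1 ≤ sSup {n | ∃ p ∈ G, p.2 - p.1 = n} :=
      le_csSup hbdd ⟨_, ⟨hu, by simp; omega, hfull, by simp; omega, by simp; omega⟩, rfl⟩
    omega

/-- Leftward propagation of adjacent pairs. -/
lemma prop_left (H : AbsHyp k T) {l : ℕ} (hl : (l+1, l+2) ∈ T) (hk : l + 2 < k) :
    (l, l+1) ∈ T := by
  classical
  apply pair_mem H l (by omega)
  by_contra hcov
  push_neg at hcov
  set G : Set (ℕ × ℕ) := {p ∈ T | p.1 < p.2 ∧ p ≠ (0, k-1) ∧ p.1 ≤ l + 1 ∧ l + 2 ≤ p.2} with hG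
  have hPG : ((l+1, l+2) : ℕ × ℕ) ∈ G := by
    refine ⟨hl, by omega, ?_, by omega, by omega⟩
    intro h; have := congrArg Prod.fst h; simp at this
  have hbdd : BddAbove {n | ∃ p ∈ G, p.2 - p.1 = n} := by
    refine ⟨k, ?_⟩
    rintro n ⟨p, hp, rfl⟩
    have := H.wf p hp.1; omega
  have hGne : {n | ∃ p ∈ G, p.2 - p.1 = n}.Nonempty := ⟨_, ⟨_, hPG, rfl⟩⟩
  obtain ⟨Y, hYG, hYlen⟩ := Nat.sSup_mem hGne hbdd
  obtain ⟨hYT, hYlt, hYne, hY1, hY2⟩ := hYG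
  have hYwf := H.wf Y hYT
  have hY1e : Y.1 = l + 1 := by
    by_contra hcon
    have := hcov Y hYT hYne (by omega); omega
  obtain ⟨q, hqT, hcr⟩ := H.part Y hYT hYlt hYne
  have hqwf := H.wf q hqT
  rcases hcr with ⟨h1, h2, h3⟩ | ⟨h1, h2, h3⟩
  · -- right-cross: union (Y.1, q.2) = (l+1, q.2) proper, in G, longer: contra
    have hu := H.union Y hYT q hqT (by omega)
    have hmin : min Y.1 q.1 = Y.1 := by omega
    have hmax : max Y.2 q.2 = q.2 := by omega
    rw [hmin, hmax] at hu
    have hfull : ((Y.1, q.2) : ℕ × ℕ) ≠ (0, k-1) := by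
      intro h; have := congrArg Prod.fst h; simp at this; omega
    have : q.2 - Y.1 ≤ sSup {n | ∃ p ∈ G, p.2 - p.1 = n} :=
      le_csSup hbdd ⟨_, ⟨hu, by simp; omega, hfull, by simp; omega, by simp; omega⟩, rfl⟩
    omega
  · -- left-cross: union (q.1, Y.2)
    have hu := H.union Y hYT q hqT (by omega)
    have hmin : min Y.1 q.1 = q.1 := by omega
    have hmax : max Y.2 q.2 = Y.2 := by omega
    rw [hmin, hmax] at hu
    by_cases hfull : ((q.1, Y.2) : ℕ × ℕ) = (0, k-1)
    · have e1 := congrArg Prod.fst hfull; have e2 := congrArg Prod.snd hfull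
      simp at e1 e2
      have := hcov q hqT (by intro h; have := congrArg Prod.snd h; simp at this; omega) (by omega)
      omega
    · have : Y.2 - q.1 ≤ sSup {n | ∃ p ∈ G, p.2 - p.1 = n} :=
        le_csSup hbdd ⟨_, ⟨hu, by simp; omega, hfull, by simp; omega, by simp; omega⟩, rfl⟩
      omega

/-- All adjacent pairs belong to `T`. -/
lemma all_pairs (H : AbsHyp k T) {w : ℕ × ℕ} (hwT : w ∈ T) (hwlt : w.1 < w.2)
    (hwne : w ≠ (0, k-1)) : ∀ l, l + 1 < k → (l, l+1) ∈ T := by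
  obtain ⟨a, hak, haT⟩ := base_pair H hwT hwlt hwne
  have up : ∀ j, a + j + 1 < k → (a + j, a + j + 1) ∈ T := by
    intro j
    induction j with
    | zero => intro _; simpa using haT
    | succ n ih =>
      intro hn
      have h1 := ih (by omega)
      have := prop_right H h1 (by omega)
      have e : a + n + 2 = a + (n+1) + 1 := by omega
      rw [e] at this
      convert this using 2 <;> try omega
  have down : ∀ j, j ≤ a → (a - j, a - j + 1) ∈ T := by
    intro j
    induction j with
    | zero => intro _; simpa using haT
    | succ n ih =>
      intro hn
      have h1 := ih (by omega)
      obtain ⟨l, hl⟩ : ∃ l, a - n = l + 1 := ⟨a - (n+1), by omega⟩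
      rw [hl] at h1
      have h2 : (l+1, l+2) ∈ T := by convert h1 using 2 <;> try omega
      have h3 := prop_left H h2 (by have := H.wf _ h1; omega)
      convert h3 using 2 <;> try omega
  intro l hl
  rcases le_or_gt a l with h | h
  · have := up (l - a) (by omega)
    convert this using 2 <;> try omega
  · have := down (a - l) (by omega)
    convert this using 2 <;> try omega

/-- Main abstract theorem: all intervals belong to `T`. -/
theorem abs_all (H : AbsHyp k T) {w z : ℕ × ℕ} (hwT : w ∈ T) (hzT : z ∈ T)
    (hcross : w.1 < z.1 ∧ z.1 ≤ w.2 ∧ w.2 < z.2) (hcover : w.1 = 0 ∧ z.2 = k - 1) :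
    ∀ a b, a ≤ b → b < k → (a, b) ∈ T := by
  have hwwf := H.wf w hwT
  have hzwf := H.wf z hzT
  have hwlt : w.1 < w.2 := by omega
  have hwne : w ≠ (0, k-1) := by
    intro h; have := congrArg Prod.snd h; simp at this; omega
  have hpairs := all_pairs H hwT hwlt hwne
  have main : ∀ d a b, b - a = d → a ≤ b → b < k → (a, b) ∈ T := by
    intro d
    induction d using Nat.strong_induction_on with
    | _ d ih =>
      intro a b hd hab hbk
      rcases Nat.eq_or_lt_of_le hab with h | h
      · rw [← h]; exact H.sing a (by omega)
      rcases Nat.eq_or_lt_of_le (Nat.succ_le_of_lt h) with h2 | h2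
      · have := hpairs a (by omega)
        convert this using 2 <;> try omega
      · -- b ≥ a + 2
        have ha1 : (a, b-1) ∈ T := ih (d-1) (by omega) a (b-1) (by omega) (by omega) (by omega)
        have ha2 : (a+1, b) ∈ T := ih (d-1) (by omega) (a+1) b (by omega) (by omega) (by omega)
        have hu := H.union _ ha1 _ ha2 (by simp; omega)
        simp only at hu
        have e1 : min a (a+1) = a := by omega
        have e2 : max (b-1) b = b := by omega
        rw [e1, e2] at hu
        exact hu
  intro a b hab hbk
  exact main (b - a) a b rfl hab hbk


section Basics

variable {C : Set α} {n : ℕ} {R : Fin n → α → α → Prop}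

lemma lin_asymm {r : α → α → Prop} (h : IsLinOn C r) {a b : α} (ha : a ∈ C) (hb : b ∈ C)
    (hab : r a b) : ¬ r b a := fun hba => h.1 a ha (h.2.1 a ha b hb a ha hab hba)

lemma lin_total_iff {r : α → α → Prop} (h : IsLinOn C r) {a b : α} (ha : a ∈ C) (hb : b ∈ C)
    (hne : a ≠ b) : r a b ↔ ¬ r b a := by
  constructor
  · exact lin_asymm h ha hb
  · intro hn
    rcases h.2.2 a ha b hb hne with h1 | h1
    · exact h1
    · exact absurd h1 hn

lemma clone_singleton (hR : IsProfile C R) {x : α} (hx : x ∈ C) :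
    {x} ∈ cloneSets C R := by
  refine ⟨⟨x, rfl⟩, by simpa using hx, ?_⟩
  rintro c rfl c' rfl a _ i
  rfl

lemma clone_C (hCne : C.Nonempty) : C ∈ cloneSets C R := by
  refine ⟨hCne, le_refl _, ?_⟩
  rintro c _ c' _ a ⟨haC, haN⟩ i
  exact absurd haC haN

lemma clone_inter {X Y : Set α} (hX : X ∈ cloneSets C R) (hY : Y ∈ cloneSets C R)
    (hne : (X ∩ Y).Nonempty) : X ∩ Y ∈ cloneSets C R := by
  refine ⟨hne, fun z hz => hX.2.1 hz.1, ?_⟩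
  rintro c hc c' hc' a ⟨haC, haN⟩ i
  by_cases hx : a ∈ X
  · have hy : a ∉ Y := fun hy => haN ⟨hx, hy⟩
    exact hY.2.2 c hc.2 c' hc'.2 a ⟨haC, hy⟩ i
  · exact hX.2.2 c hc.1 c' hc'.1 a ⟨haC, hx⟩ i

lemma clone_union {X Y : Set α} (hX : X ∈ cloneSets C R) (hY : Y ∈ cloneSets C R)
    (hne : (X ∩ Y).Nonempty) : X ∪ Y ∈ cloneSets C R := by
  obtain ⟨w, hwX, hwY⟩ := hne
  refine ⟨⟨w, Or.inl hwX⟩, fun z hz => hz.elim (fun h => hX.2.1 h) (fun h => hY.2.1 h), ?_⟩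
  rintro c hc c' hc' a ⟨haC, haN⟩ i
  have haX : a ∉ X := fun h => haN (Or.inl h)
  have haY : a ∉ Y := fun h => haN (Or.inr h)
  have key : ∀ z ∈ X ∪ Y, (R i z a ↔ R i w a) := by
    rintro z (hz | hz)
    · exact hX.2.2 z hz w hwX a ⟨haC, haX⟩ i
    · exact hY.2.2 z hz w hwY a ⟨haC, haY⟩ i
  rw [key c hc, key c' hc']

/-- Points outside a clone compare identically with all points of the clone. -/
lemma clone_outside (hR : IsProfile C R) {Y : Set α} (hY : Y ∈ cloneSets C R)
    {y y' c : α} (hy : y ∈ Y) (hy' : y' ∈ Y) (hc : c ∈ C) (hcY : c ∉ Y) (i : Fin n) :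
    R i c y ↔ R i c y' := by
  have h1 := hY.2.2 y hy y' hy' c ⟨hc, hcY⟩ i
  have hyC := hY.2.1 hy
  have hy'C := hY.2.1 hy'
  have hne : c ≠ y := fun h => hcY (h ▸ hy)
  have hne' : c ≠ y' := fun h => hcY (h ▸ hy')
  rw [lin_total_iff (hR.2 i) hc hyC hne, lin_total_iff (hR.2 i) hc hy'C hne', not_iff_not]
  exact h1

lemma clone_diff (hR : IsProfile C R) {X Y : Set α} (hX : X ∈ cloneSets C R)
    (hY : Y ∈ cloneSets C R) (hb : Bowtie X Y) : X \ Y ∈ cloneSets C R := by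
  obtain ⟨⟨w, hwX, hwY⟩, hXY, ⟨z, hzY, hzX⟩⟩ := hb
  refine ⟨hXY, fun u hu => hX.2.1 hu.1, ?_⟩
  rintro c ⟨hcX, hcY⟩ c' ⟨hcX', hcY'⟩ a ⟨haC, haN⟩ i
  by_cases haX : a ∈ X
  · -- then a ∈ Y
    have haY : a ∈ Y := by
      by_contra haY
      exact haN ⟨haX, haY⟩
    -- R i c a ↔ R i c w ↔ R i c z ↔ R i c' z ↔ R i c' w ↔ R i c' a
    have hcC := hX.2.1 hcX
    have hcC' := hX.2.1 hcX'
    have h1 : R i c a ↔ R i c w := clone_outside hR hY haY hwY hcC hcY i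
    have h2 : R i c w ↔ R i c z := by
      have hzC := hY.2.1 hzY
      have e1 := hX.2.2 c hcX w hwX z ⟨hzC, hzX⟩ i
      -- R i c z ↔ R i w z ; and R i c w ↔ R i c z?
      -- use: c, w ∈ X, z ∉ X : R i c z ↔ R i w z. Also w ∈ Y, z ∈ Y, c ∉ Y: R i c w ↔ R i c z.
      exact clone_outside hR hY hwY hzY hcC hcY i
    have h1' : R i c' a ↔ R i c' w := clone_outside hR hY haY hwY hcC' hcY' i
    have h2' : R i c' w ↔ R i c' z := clone_outside hR hY hwY hzY hcC' hcY' i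
    have h3 : R i c z ↔ R i c' z := by
      have hzC := hY.2.1 hzY
      exact hX.2.2 c hcX c' hcX' z ⟨hzC, hzX⟩ i
    rw [h1, h2, h3, ← h2', ← h1']
  · exact hX.2.2 c hcX c' hcX' a ⟨haC, haX⟩ i

/-- Disjoint nonempty clones separate under every voter. -/
lemma clone_sep (hR : IsProfile C R) {X Y : Set α} (hX : X ∈ cloneSets C R)
    (hY : Y ∈ cloneSets C R) (hd : X ∩ Y = ∅) (i : Fin n) :
    (∀ x ∈ X, ∀ y ∈ Y, R i x y) ∨ (∀ x ∈ X, ∀ y ∈ Y, R i y x) := by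
  obtain ⟨x0, hx0⟩ := hX.1
  obtain ⟨y0, hy0⟩ := hY.1
  have hx0C := hX.2.1 hx0
  have hy0C := hY.2.1 hy0
  have hx0Y : x0 ∉ Y := fun h => (Set.eq_empty_iff_forall_notMem.1 hd x0) ⟨hx0, h⟩
  have hy0X : y0 ∉ X := fun h => (Set.eq_empty_iff_forall_notMem.1 hd y0) ⟨h, hy0⟩
  have hne : x0 ≠ y0 := fun h => hx0Y (h ▸ hy0)
  have key : ∀ x ∈ X, ∀ y ∈ Y, (R i x y ↔ R i x0 y0) := by
    intro x hx y hy
    have hxC := hX.2.1 hx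
    have hxY : x ∉ Y := fun h => (Set.eq_empty_iff_forall_notMem.1 hd x) ⟨hx, h⟩
    have hyX : y ∉ X := fun h => (Set.eq_empty_iff_forall_notMem.1 hd y) ⟨h, hy⟩
    have hyC := hY.2.1 hy
    have h1 : R i x y ↔ R i x y0 := clone_outside hR hY hy hy0 hxC hxY i
    have h2 : R i x y0 ↔ R i x0 y0 := hX.2.2 x hx x0 hx0 y0 ⟨hy0C, hy0X⟩ i
    rw [h1, h2]
  rcases (hR.2 i).2.2 x0 hx0C y0 hy0C hne with h | h
  · left; intro x hx y hy; exact (key x hx y hy).2 h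
  · right; intro x hx y hy
    have hxC := hX.2.1 hx
    have hyC := hY.2.1 hy
    have hne2 : x ≠ y := fun he => (Set.eq_empty_iff_forall_notMem.1 hd x) ⟨hx, he ▸ hy⟩
    rw [lin_total_iff (hR.2 i) hyC hxC (Ne.symm hne2)]
    intro hxy
    have := (key x hx y hy).1 hxy
    exact lin_asymm (hR.2 i) hy0C hx0C h this

end Basics

section Nodes

variable {C : Set α} {n : ℕ} {R : Fin n → α → α → Prop}

/-- A node: a clone that bowties no clone. -/
def IsNode (C : Set α) {n : ℕ} (R : Fin n → α → α → Prop) (X : Set α) : Prop :=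
  X ∈ cloneSets C R ∧ ∀ Y ∈ cloneSets C R, ¬ Bowtie X Y

lemma node_singleton {x : α} (hx : x ∈ C) : IsNode C R {x} := by
  refine ⟨⟨⟨x, rfl⟩, by simpa using hx, by rintro c rfl c' rfl a _ i; rfl⟩, ?_⟩
  intro Y _ hb
  obtain ⟨u, hu1, hu2⟩ := hb.1
  obtain ⟨v, hv1, hv2⟩ := hb.2.1
  have hu : u = x := hu1
  have hv : v = x := hv1
  subst hu; subst hv
  exact hv2 hu2

lemma node_C (hCne : C.Nonempty) : IsNode C R C := by
  refine ⟨clone_C hCne, ?_⟩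
  intro Y hY hb
  obtain ⟨v, hv1, hv2⟩ := hb.2.2
  exact hv2 (hY.2.1 hv1)

lemma node_or_subset {N Y : Set α} (hN : IsNode C R N) (hY : Y ∈ cloneSets C R)
    (hne : (N ∩ Y).Nonempty) : N ⊆ Y ∨ Y ⊆ N := by
  by_contra hcon
  push_neg at hcon
  obtain ⟨h1, h2⟩ := hcon
  obtain ⟨u, hu1, hu2⟩ := Set.not_subset.1 h1
  obtain ⟨v, hv1, hv2⟩ := Set.not_subset.1 h2
  exact hN.2 Y hY ⟨hne, ⟨u, hu1, hu2⟩, ⟨v, hv1, hv2⟩⟩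

lemma nodes_nested {X Y : Set α} (hX : IsNode C R X) (hY : IsNode C R Y)
    (hne : (X ∩ Y).Nonempty) : X ⊆ Y ∨ Y ⊆ X :=
  node_or_subset hX hY.1 hne

lemma clones_finite (hC : C.Finite) : (cloneSets C R).Finite :=
  hC.finite_subsets.subset (fun _ hX => hX.2.1)

/-- Least node containing a set. -/
def nuS (C : Set α) {n : ℕ} (R : Fin n → α → α → Prop) (S : Set α) : Set α :=
  ⋂₀ {P | IsNode C R P ∧ S ⊆ P}

lemma nuS_spec (hC : C.Finite) {S : Set α} (hS : S.Nonempty) (hSC : S ⊆ C) :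
    IsNode C R (nuS C R S) ∧ S ⊆ nuS C R S := by
  classical
  set F : Set (Set α) := {P | IsNode C R P ∧ S ⊆ P} with hF
  have hCF : C ∈ F := ⟨node_C (hS.mono hSC), hSC⟩
  have hfin : F.Finite := (clones_finite hC).subset (fun P hP => hP.1.1)
  obtain ⟨m, hmF, hmin⟩ := Set.Finite.exists_minimalFor id F hfin ⟨C, hCF⟩
  obtain ⟨s0, hs0⟩ := hS
  have hleast : ∀ P ∈ F, m ⊆ P := by
    intro P hP
    rcases nodes_nested hmF.1 hP.1 ⟨s0, hmF.2 hs0, hP.2 hs0⟩ with h | h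
    · exact h
    · exact hmin hP h
  have heq : nuS C R S = m := by
    apply Set.Subset.antisymm
    · exact Set.sInter_subset_of_mem hmF
    · exact Set.subset_sInter (fun P hP => hleast P hP)
  rw [heq]
  exact ⟨hmF.1, hmF.2⟩

lemma nuS_least {S P : Set α} (hP : IsNode C R P) (hSP : S ⊆ P) : nuS C R S ⊆ P :=
  Set.sInter_subset_of_mem ⟨hP, hSP⟩

/-- Least node containing two points. -/
def nu (C : Set α) {n : ℕ} (R : Fin n → α → α → Prop) (c d : α) : Set α :=
  nuS C R {c, d}

lemma nu_comm (c d : α) : nu C R c d = nu C R d c := by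
  unfold nu; rw [Set.pair_comm]

lemma nu_spec (hC : C.Finite) {c d : α} (hc : c ∈ C) (hd : d ∈ C) :
    IsNode C R (nu C R c d) ∧ c ∈ nu C R c d ∧ d ∈ nu C R c d := by
  have := nuS_spec (R := R) hC (S := {c, d}) ⟨c, Or.inl rfl⟩ (by
    rintro x (rfl | rfl) <;> assumption)
  exact ⟨this.1, this.2 (Or.inl rfl), this.2 (Or.inr rfl)⟩

lemma nu_least {c d : α} {P : Set α} (hP : IsNode C R P) (hcP : c ∈ P) (hdP : d ∈ P) :
    nu C R c d ⊆ P :=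
  nuS_least hP (by rintro x (rfl | rfl) <;> assumption)

/-- The child of `N` containing `x`: greatest proper subnode through `x`. -/
def ch (C : Set α) {n : ℕ} (R : Fin n → α → α → Prop) (N : Set α) (x : α) : Set α :=
  ⋃₀ {W | IsNode C R W ∧ x ∈ W ∧ W ⊆ N ∧ W ≠ N}

lemma ch_spec (hC : C.Finite) {N : Set α} {x : α} (hN : IsNode C R N) (hx : x ∈ N)
    (hNx : N ≠ {x}) :
    IsNode C R (ch C R N x) ∧ x ∈ ch C R N x ∧ ch C R N x ⊆ N ∧ ch C R N x ≠ N ∧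
      ∀ W, IsNode C R W → x ∈ W → W ⊆ N → W ≠ N → W ⊆ ch C R N x := by
  classical
  set F : Set (Set α) := {W | IsNode C R W ∧ x ∈ W ∧ W ⊆ N ∧ W ≠ N} with hF
  have hxC : x ∈ C := hN.1.2.1 hx
  have hsF : {x} ∈ F := ⟨node_singleton hxC, rfl, by simpa using hx, fun h => hNx h.symm⟩
  have hfin : F.Finite := (clones_finite hC).subset (fun P hP => hP.1.1)
  obtain ⟨m, hmF, hmax⟩ := Set.Finite.exists_maximalFor id F hfin ⟨{x}, hsF⟩
  have hgreatest : ∀ W ∈ F, W ⊆ m := by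
    intro W hW
    rcases nodes_nested hW.1 hmF.1 ⟨x, hW.2.1, hmF.2.1⟩ with h | h
    · exact h
    · exact hmax hW h
  have heq : ch C R N x = m := by
    apply Set.Subset.antisymm
    · exact Set.sUnion_subset (fun W hW => hgreatest W hW)
    · exact Set.subset_sUnion_of_mem hmF
  rw [heq]
  exact ⟨hmF.1, hmF.2.1, hmF.2.2.1, hmF.2.2.2, fun W h1 h2 h3 h4 => hgreatest W ⟨h1, h2, h3, h4⟩⟩

end Nodes

section Children

variable {C : Set α} {n : ℕ} {R : Fin n → α → α → Prop}

/-- `N` is covered by two properly overlapping clones. -/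
def Qwit (C : Set α) {n : ℕ} (R : Fin n → α → α → Prop) (N : Set α) : Prop :=
  ∃ Y ∈ cloneSets C R, ∃ Z ∈ cloneSets C R, Bowtie Y Z ∧ Y ∪ Z = N

lemma N_ne_singleton {N W : Set α} (hWN : W ⊆ N) (hWne : W ≠ N) {w : α} (hw : w ∈ W) :
    N ≠ {w} := by
  intro h
  apply hWne
  apply Set.Subset.antisymm hWN
  rw [h]
  rintro z rfl
  exact hw

/-- In a non-Q node, every proper subclone lies inside a child. -/
lemma subset_child (hC : C.Finite) {N : Set α} (hN : IsNode C R N) (hQ : ¬ Qwit C R N)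
    {W : Set α} (hW : W ∈ cloneSets C R) (hWN : W ⊆ N) (hWne : W ≠ N) :
    ∀ w ∈ W, W ⊆ ch C R N w := by
  suffices H : ∀ m : ℕ, ∀ W, W ∈ cloneSets C R → W ⊆ N → W ≠ N → (N \ W).ncard = m →
      ∀ w ∈ W, W ⊆ ch C R N w by
    exact fun w hw => H _ W hW hWN hWne rfl w hw
  intro m
  induction m using Nat.strong_induction_on with
  | _ m ih =>
    intro W hW hWN hWne hm w hw
    by_cases hnode : IsNode C R W
    · exact (ch_spec hC hN (hWN hw) (N_ne_singleton hWN hWne hw)).2.2.2.2 W hnode hw hWN hWne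
    · have hex : ∃ Y ∈ cloneSets C R, Bowtie W Y := by
        by_contra hcon
        push_neg at hcon
        exact hnode ⟨hW, hcon⟩
      obtain ⟨Y, hY, hb⟩ := hex
      obtain ⟨u, huW, huY⟩ := hb.1
      have hYN : Y ⊆ N := by
        rcases node_or_subset hN hY ⟨u, hWN huW, huY⟩ with h | h
        · exfalso
          obtain ⟨v, hv1, hv2⟩ := hb.2.1
          exact hv2 (h (hWN hv1))
        · exact h
      have hW' : W ∪ Y ∈ cloneSets C R := clone_union hW hY hb.1
      have hW'N : W ∪ Y ⊆ N := Set.union_subset hWN hYN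
      have hW'ne : W ∪ Y ≠ N := by
        intro h
        exact hQ ⟨W, hW, Y, hY, hb, h⟩
      obtain ⟨y, hyY, hyW⟩ := hb.2.2
      have hssub : N \ (W ∪ Y) ⊂ N \ W := by
        constructor
        · intro z hz
          exact ⟨hz.1, fun h => hz.2 (Or.inl h)⟩
        · intro hsub
          have : y ∈ N \ W := ⟨hYN hyY, hyW⟩
          have := hsub this
          exact this.2 (Or.inr hyY)
      have hfin : (N \ W).Finite := hC.subset (fun z hz => hN.1.2.1 hz.1)
      have hlt : (N \ (W ∪ Y)).ncard < (N \ W).ncard := Set.ncard_lt_ncard hssub hfin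
      rw [hm] at hlt
      have := ih _ hlt (W ∪ Y) hW' hW'N hW'ne rfl w (Or.inl hw)
      exact fun z hz => this (Or.inl hz)

lemma ch_eq_of_mem (hC : C.Finite) {N : Set α} (hN : IsNode C R N) {x : α} (hx : x ∈ N)
    (hNx : N ≠ {x}) {z : α} (hz : z ∈ ch C R N x) : ch C R N z = ch C R N x := by
  obtain ⟨hnode, hxm, hsub, hne, hgr⟩ := ch_spec hC hN hx hNx
  have hzN : z ∈ N := hsub hz
  have hNz : N ≠ {z} := N_ne_singleton hsub hne hz
  obtain ⟨hnode', hzm, hsub', hne', hgr'⟩ := ch_spec hC hN hzN hNz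
  apply Set.Subset.antisymm
  · -- ch N z ⊆ ch N x since x ∈ ch N z
    have h1 : ch C R N x ⊆ ch C R N z := hgr' _ hnode hz hsub hne
    exact hgr _ hnode' (h1 hxm) hsub' hne'
  · exact hgr' _ hnode hz hsub hne

lemma ch_disjoint (hC : C.Finite) {N : Set α} (hN : IsNode C R N) {x y : α} (hx : x ∈ N)
    (hy : y ∈ N) (hNx : N ≠ {x}) (hNy : N ≠ {y}) (hne : ch C R N x ≠ ch C R N y) :
    ch C R N x ∩ ch C R N y = ∅ := by
  by_contra hcon
  obtain ⟨z, hz1, hz2⟩ := Set.nonempty_iff_ne_empty.2 hcon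
  exact hne ((ch_eq_of_mem hC hN hx hNx hz1).symm.trans (ch_eq_of_mem hC hN hy hNy hz2))

end Children

section Pos

variable {C : Set α} {n : ℕ} {R : Fin n → α → α → Prop}

/-- Position of the child of `x` in node `N` w.r.t. reference voter `i0`. -/
noncomputable def pos (C : Set α) {n : ℕ} (R : Fin n → α → α → Prop) (i0 : Fin n)
    (N : Set α) (x : α) : ℕ :=
  (N ∩ {y | ∀ z ∈ ch C R N x, R i0 y z}).ncard

lemma pos_le (hC : C.Finite) {i0 : Fin n} {N : Set α} (hNC : N ⊆ C) (x : α) :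
    pos C R i0 N x ≤ C.ncard := by
  apply Set.ncard_le_ncard _ hC
  exact fun z hz => hNC hz.1

lemma pos_congr {i0 : Fin n} {N : Set α} {x y : α} (h : ch C R N x = ch C R N y) :
    pos C R i0 N x = pos C R i0 N y := by
  unfold pos; rw [h]

lemma pos_lt_of_sep (hR : IsProfile C R) (hC : C.Finite) {i0 : Fin n} {N : Set α}
    (hN : IsNode C R N) {x y : α} (hx : x ∈ N) (hy : y ∈ N) (hNx : N ≠ {x}) (hNy : N ≠ {y})
    (hsep : ∀ u ∈ ch C R N x, ∀ v ∈ ch C R N y, R i0 u v) :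
    pos C R i0 N x < pos C R i0 N y := by
  obtain ⟨hnx, hxm, hsubx, _, _⟩ := ch_spec hC hN hx hNx
  obtain ⟨hny, hym, hsuby, _, _⟩ := ch_spec hC hN hy hNy
  have hNC : N ⊆ C := hN.1.2.1
  apply Set.ncard_lt_ncard
  · constructor
    · rintro u ⟨huN, hu⟩
      refine ⟨huN, ?_⟩
      intro v hv
      exact (hR.2 i0).2.1 u (hNC huN) x (hNC (hsubx hxm)) v (hNC (hsuby hv))
        (hu x hxm) (hsep x hxm v hv)
    · intro hsub
      have hxmem : x ∈ N ∩ {u | ∀ z ∈ ch C R N y, R i0 u z} :=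
        ⟨hx, fun z hz => hsep x hxm z hz⟩
      have hxnot : x ∉ N ∩ {u | ∀ z ∈ ch C R N x, R i0 u z} := by
        rintro ⟨_, hu⟩
        exact (hR.2 i0).1 x (hNC hx) (hu x hxm)
      exact hxnot (hsub hxmem)
  · exact hC.subset (fun z hz => hNC hz.1)

lemma ch_sep (hR : IsProfile C R) (hC : C.Finite) {N : Set α} (hN : IsNode C R N)
    {x y : α} (hx : x ∈ N) (hy : y ∈ N) (hNx : N ≠ {x}) (hNy : N ≠ {y})
    (hne : ch C R N x ≠ ch C R N y) (i0 : Fin n) :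
    (∀ u ∈ ch C R N x, ∀ v ∈ ch C R N y, R i0 u v) ∨
      (∀ u ∈ ch C R N x, ∀ v ∈ ch C R N y, R i0 v u) := by
  have hd := ch_disjoint hC hN hx hy hNx hNy hne
  obtain ⟨hnx, _, _, _, _⟩ := ch_spec hC hN hx hNx
  obtain ⟨hny, _, _, _, _⟩ := ch_spec hC hN hy hNy
  rcases clone_sep hR hnx.1 hny.1 hd i0 with h | h
  · exact Or.inl h
  · exact Or.inr h

lemma ch_eq_of_pos_eq (hR : IsProfile C R) (hC : C.Finite) {i0 : Fin n} {N : Set α}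
    (hN : IsNode C R N) {x y : α} (hx : x ∈ N) (hy : y ∈ N) (hNx : N ≠ {x}) (hNy : N ≠ {y})
    (heq : pos C R i0 N x = pos C R i0 N y) : ch C R N x = ch C R N y := by
  by_contra hne
  rcases ch_sep hR hC hN hx hy hNx hNy hne i0 with h | h
  · have := pos_lt_of_sep hR hC hN hx hy hNx hNy h
    omega
  · have := pos_lt_of_sep hR hC hN hy hx hNy hNx (fun u hu v hv => h v hv u hu)
    omega

end Pos

section Tau

variable {C : Set α} {n : ℕ} {R : Fin n → α → α → Prop}

noncomputable def nodeList (C : Set α) {n : ℕ} (R : Fin n → α → α → Prop)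
    (hC : C.Finite) : List (Set α) :=
  ((clones_finite (R := R) hC).subset
    (fun X (hX : X ∈ {X | IsNode C R X}) => hX.1)).toFinset.toList

lemma nodeList_mem (hC : C.Finite) {N : Set α} (hN : IsNode C R N) :
    N ∈ nodeList C R hC := by
  unfold nodeList
  rw [Finset.mem_toList, Set.Finite.mem_toFinset]
  exact hN

open Classical in
/-- Start of the time window of a node. -/
noncomputable def wnd (C : Set α) {n : ℕ} (R : Fin n → α → α → Prop) (hC : C.Finite)
    (N : Set α) : ℕ :=
  1 + (2 * C.ncard + 2) * ((nodeList C R hC).idxOf N)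

lemma wnd_sep (hC : C.Finite) {N N' : Set α} (hN : IsNode C R N) (hN' : IsNode C R N')
    (hne : N ≠ N') {a b : ℕ} (ha : a ≤ 2 * C.ncard + 1) (hb : b ≤ 2 * C.ncard + 1) :
    wnd C R hC N + a ≠ wnd C R hC N' + b := by
  classical
  intro hcon
  unfold wnd at hcon
  set L := nodeList C R hC with hL
  have hmemN : N ∈ L := nodeList_mem hC hN
  have hmemN' : N' ∈ L := nodeList_mem hC hN'
  have hidx : L.idxOf N ≠ L.idxOf N' := by
    intro h
    exact hne ((List.idxOf_inj hmemN).1 h)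
  set B := 2 * C.ncard + 2 with hB
  set i := L.idxOf N with hi
  set i' := L.idxOf N' with hi'
  rcases Nat.lt_or_ge i i' with h | h
  · have h2 : B * (i + 1) ≤ B * i' := Nat.mul_le_mul_left B (by omega)
    rw [Nat.mul_succ] at h2
    omega
  · have hlt : i' < i := by omega
    have h2 : B * (i' + 1) ≤ B * i := Nat.mul_le_mul_left B (by omega)
    rw [Nat.mul_succ] at h2
    omega

open Classical in
/-- The crossing time of the pair `{c,d}`. -/
noncomputable def tau (C : Set α) {n : ℕ} (R : Fin n → α → α → Prop) (i0 : Fin n)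
    (hC : C.Finite) (c d : α) : ℕ :=
  wnd C R hC (nu C R c d) +
    (if Qwit C R (nu C R c d) then 0
     else pos C R i0 (nu C R c d) c + pos C R i0 (nu C R c d) d + 1)

lemma tau_comm {i0 : Fin n} (hC : C.Finite) (c d : α) :
    tau C R i0 hC c d = tau C R i0 hC d c := by
  unfold tau
  rw [nu_comm c d]
  congr 1
  by_cases h : Qwit C R (nu C R d c)
  · simp [h]
  · simp [h]; omega

lemma tau_pos {i0 : Fin n} (hC : C.Finite) (c d : α) : 1 ≤ tau C R i0 hC c d := by
  unfold tau wnd; omega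

lemma tau_window {i0 : Fin n} (hC : C.Finite) {c d : α} (hc : c ∈ C) (hd : d ∈ C) :
    wnd C R hC (nu C R c d) ≤ tau C R i0 hC c d ∧
      tau C R i0 hC c d ≤ wnd C R hC (nu C R c d) + 2 * C.ncard + 1 := by
  classical
  have hnu := nu_spec (R := R) hC hc hd
  have hsub : nu C R c d ⊆ C := hnu.1.1.2.1
  have h1 := pos_le (R := R) (i0 := i0) hC hsub c
  have h2 := pos_le (R := R) (i0 := i0) hC hsub d
  unfold tau
  by_cases h : Qwit C R (nu C R c d) <;> simp [h] <;> omega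

lemma tau_bound {i0 : Fin n} (hC : C.Finite) {c d : α} (hc : c ∈ C) (hd : d ∈ C) :
    tau C R i0 hC c d ≤ (2 * C.ncard + 2) * (nodeList C R hC).length := by
  classical
  have hnu := nu_spec (R := R) hC hc hd
  have hmem : nu C R c d ∈ nodeList C R hC := nodeList_mem hC hnu.1
  have hidx : (nodeList C R hC).idxOf (nu C R c d) < (nodeList C R hC).length :=
    List.idxOf_lt_length_iff.2 hmem
  have hw := (tau_window (R := R) (i0 := i0) hC hc hd).2
  unfold wnd at hw
  set B := 2 * C.ncard + 2 with hB
  set i := (nodeList C R hC).idxOf (nu C R c d) with hi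
  have h2 : B * (i + 1) ≤ B * (nodeList C R hC).length := Nat.mul_le_mul_left B (by omega)
  rw [Nat.mul_succ] at h2
  omega

lemma tau_eq_nu {i0 : Fin n} (hC : C.Finite) {c d c' d' : α} (hc : c ∈ C) (hd : d ∈ C)
    (hc' : c' ∈ C) (hd' : d' ∈ C)
    (heq : tau C R i0 hC c d = tau C R i0 hC c' d') : nu C R c d = nu C R c' d' := by
  by_contra hne
  have h1 := (nu_spec (R := R) hC hc hd).1
  have h2 := (nu_spec (R := R) hC hc' hd').1
  obtain ⟨l1, u1⟩ := tau_window (R := R) (i0 := i0) hC hc hd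
  obtain ⟨l2, u2⟩ := tau_window (R := R) (i0 := i0) hC hc' hd'
  refine wnd_sep hC h1 h2 hne
    (a := tau C R i0 hC c d - wnd C R hC (nu C R c d))
    (b := tau C R i0 hC c' d' - wnd C R hC (nu C R c' d')) (by omega) (by omega) (by omega)

end Tau

section VB

variable {C : Set α} {n : ℕ} {R : Fin n → α → α → Prop}

lemma mem_clone_between (hR : IsProfile C R) {X : Set α} (hX : X ∈ cloneSets C R)
    {c e d : α} (hc : c ∈ X) (he : e ∈ X) (hd : d ∈ C) {i : Fin n}
    (h1 : R i c d) (h2 : R i d e) : d ∈ X := by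
  by_contra hdX
  have := hX.2.2 c hc e he d ⟨hd, hdX⟩ i
  have h3 : R i e d := this.1 h1
  exact lin_asymm (hR.2 i) hd (hX.2.1 he) h2 h3

lemma ne_of_rel (hR : IsProfile C R) {i : Fin n} {a b : α} (ha : a ∈ C)
    (h : R i a b) : a ≠ b := by
  rintro rfl
  exact (hR.2 i).1 a ha h

/-- Betweenness of crossing times (V). -/
lemma tau_btw (hR : IsProfile C R) (hC : C.Finite) {i0 : Fin n} {c d e : α}
    (hc : c ∈ C) (hd : d ∈ C) (he : e ∈ C) (hcd : R i0 c d) (hde : R i0 d e) :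
    min (tau C R i0 hC c d) (tau C R i0 hC d e) ≤ tau C R i0 hC c e ∧
      tau C R i0 hC c e ≤ max (tau C R i0 hC c d) (tau C R i0 hC d e) := by
  classical
  have hce : R i0 c e := (hR.2 i0).2.1 c hc d hd e he hcd hde
  have hcdne : c ≠ d := ne_of_rel hR hc hcd
  have hdene : d ≠ e := ne_of_rel hR hd hde
  have hcene : c ≠ e := ne_of_rel hR hc hce
  obtain ⟨hNnode, hcN, heN⟩ := nu_spec (R := R) hC hc he
  set N := nu C R c e with hN
  have hdN : d ∈ N := mem_clone_between hR hNnode.1 hcN heN hd hcd hde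
  have hcdsub : nu C R c d ⊆ N := nu_least hNnode hcN hdN
  have hdesub : nu C R d e ⊆ N := nu_least hNnode hdN heN
  obtain ⟨hn1, hc1, hd1⟩ := nu_spec (R := R) hC hc hd
  obtain ⟨hn2, hd2, he2⟩ := nu_spec (R := R) hC hd he
  have hNc : N ≠ {c} := by intro h; rw [h] at heN; exact hcene heN.symm
  have hNd : N ≠ {d} := by intro h; rw [h] at hcN; exact hcdne hcN
  have hNe : N ≠ {e} := by intro h; rw [h] at hcN; exact hcene hcN
  have halt : nu C R c d = N ∨ nu C R d e = N := by
    by_contra hcon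
    push_neg at hcon
    rcases nodes_nested hn1 hn2 ⟨d, hd1, hd2⟩ with h | h
    · -- nu c d ⊆ nu d e ∋ c, e ⇒ N ⊆ nu d e ⊊ N
      have : N ⊆ nu C R d e := nu_least hn2 (h hc1) he2
      exact hcon.2 (Set.Subset.antisymm hdesub this)
    · have : N ⊆ nu C R c d := nu_least hn1 hc1 (h he2)
      exact hcon.1 (Set.Subset.antisymm hcdsub this)
  by_cases hQ : Qwit C R N
  · -- in a Q node, compare: we show each tau with nu = N equals wnd N
    have key : ∀ x y : α, x ∈ C → y ∈ C → nu C R x y = N → tau C R i0 hC x y = wnd C R hC N := by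
      intro x y hx hy hxy
      unfold tau
      rw [hxy, if_pos hQ]
      omega
    have hceN : tau C R i0 hC c e = wnd C R hC N := key c e hc he rfl
    rcases halt with h | h
    · have h1 : tau C R i0 hC c d = wnd C R hC N := key c d hc hd h
      rw [hceN, h1]
      omega
    · have h1 : tau C R i0 hC d e = wnd C R hC N := key d e hd he h
      rw [hceN, h1]
      omega
  · -- P-type node
    have hchd : ∀ x y : α, x ∈ N → y ∈ N → nu C R x y ≠ N → nu C R x y ⊆ N →
        ch C R N x = ch C R N y ∧ x ∈ N := by
      intro x y hx hy hne hsub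
      obtain ⟨hnxy, hxm, hym⟩ := nu_spec (R := R) hC (hNnode.1.2.1 hx) (hNnode.1.2.1 hy)
      have h1 : nu C R x y ⊆ ch C R N x :=
        (ch_spec hC hNnode hx (N_ne_singleton hsub hne hxm)).2.2.2.2 _ hnxy hxm hsub hne
      have hyin : y ∈ ch C R N x := h1 hym
      exact ⟨(ch_eq_of_mem hC hNnode hx (N_ne_singleton hsub hne hxm) hyin).symm, hx⟩
    rcases halt with h | h
    · -- nu c d = N ; show tau c e = tau c d
      by_cases h2 : nu C R d e = N
      · -- both = N: strictly ordered children
        have hnecd : ch C R N c ≠ ch C R N d := by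
          intro hcc
          have : nu C R c d ⊆ ch C R N c := nu_least
            (ch_spec hC hNnode hcN hNc).1 (ch_spec hC hNnode hcN hNc).2.1
            (by rw [hcc]; exact (ch_spec hC hNnode hdN hNd).2.1)
          rw [h] at this
          exact (ch_spec hC hNnode hcN hNc).2.2.2.1 (Set.Subset.antisymm
            (ch_spec hC hNnode hcN hNc).2.2.1 this)
        have hnede : ch C R N d ≠ ch C R N e := by
          intro hcc
          have : nu C R d e ⊆ ch C R N d := nu_least
            (ch_spec hC hNnode hdN hNd).1 (ch_spec hC hNnode hdN hNd).2.1
            (by rw [hcc]; exact (ch_spec hC hNnode heN hNe).2.1)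
          rw [h2] at this
          exact (ch_spec hC hNnode hdN hNd).2.2.2.1 (Set.Subset.antisymm
            (ch_spec hC hNnode hdN hNd).2.2.1 this)
        have hsep1 : ∀ u ∈ ch C R N c, ∀ v ∈ ch C R N d, R i0 u v := by
          rcases ch_sep hR hC hNnode hcN hdN hNc hNd hnecd i0 with hs | hs
          · exact hs
          · exfalso
            exact lin_asymm (hR.2 i0) hc hd hcd
              (hs c (ch_spec hC hNnode hcN hNc).2.1 d (ch_spec hC hNnode hdN hNd).2.1)
        have hsep2 : ∀ u ∈ ch C R N d, ∀ v ∈ ch C R N e, R i0 u v := by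
          rcases ch_sep hR hC hNnode hdN heN hNd hNe hnede i0 with hs | hs
          · exact hs
          · exfalso
            exact lin_asymm (hR.2 i0) hd he hde
              (hs d (ch_spec hC hNnode hdN hNd).2.1 e (ch_spec hC hNnode heN hNe).2.1)
        have hp1 : pos C R i0 N c < pos C R i0 N d :=
          pos_lt_of_sep hR hC hNnode hcN hdN hNc hNd hsep1
        have hp2 : pos C R i0 N d < pos C R i0 N e :=
          pos_lt_of_sep hR hC hNnode hdN heN hNd hNe hsep2
        have e1 : tau C R i0 hC c d = wnd C R hC N + (pos C R i0 N c + pos C R i0 N d + 1) := by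
          unfold tau; rw [h, if_neg hQ]
        have e2 : tau C R i0 hC d e = wnd C R hC N + (pos C R i0 N d + pos C R i0 N e + 1) := by
          unfold tau; rw [h2, if_neg hQ]
        have e3 : tau C R i0 hC c e = wnd C R hC N + (pos C R i0 N c + pos C R i0 N e + 1) := by
          unfold tau; rw [← hN, if_neg hQ]
        rw [e1, e2, e3]
        omega
      · -- nu d e ⊊ N : pos d = pos e, tau c e = tau c d
        obtain ⟨hch, _⟩ := hchd d e hdN heN h2 hdesub
        have e1 : tau C R i0 hC c d = wnd C R hC N + (pos C R i0 N c + pos C R i0 N d + 1) := by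
          unfold tau; rw [h, if_neg hQ]
        have e3 : tau C R i0 hC c e = wnd C R hC N + (pos C R i0 N c + pos C R i0 N e + 1) := by
          unfold tau; rw [← hN, if_neg hQ]
        have : pos C R i0 N d = pos C R i0 N e := pos_congr hch
        rw [e1, e3, this]
        omega
    · -- nu d e = N
      by_cases h2 : nu C R c d = N
      · -- both = N (same as above)
        have hnecd : ch C R N c ≠ ch C R N d := by
          intro hcc
          have : nu C R c d ⊆ ch C R N c := nu_least
            (ch_spec hC hNnode hcN hNc).1 (ch_spec hC hNnode hcN hNc).2.1
            (by rw [hcc]; exact (ch_spec hC hNnode hdN hNd).2.1)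
          rw [h2] at this
          exact (ch_spec hC hNnode hcN hNc).2.2.2.1 (Set.Subset.antisymm
            (ch_spec hC hNnode hcN hNc).2.2.1 this)
        have hnede : ch C R N d ≠ ch C R N e := by
          intro hcc
          have : nu C R d e ⊆ ch C R N d := nu_least
            (ch_spec hC hNnode hdN hNd).1 (ch_spec hC hNnode hdN hNd).2.1
            (by rw [hcc]; exact (ch_spec hC hNnode heN hNe).2.1)
          rw [h] at this
          exact (ch_spec hC hNnode hdN hNd).2.2.2.1 (Set.Subset.antisymm
            (ch_spec hC hNnode hdN hNd).2.2.1 this)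
        have hsep1 : ∀ u ∈ ch C R N c, ∀ v ∈ ch C R N d, R i0 u v := by
          rcases ch_sep hR hC hNnode hcN hdN hNc hNd hnecd i0 with hs | hs
          · exact hs
          · exfalso
            exact lin_asymm (hR.2 i0) hc hd hcd
              (hs c (ch_spec hC hNnode hcN hNc).2.1 d (ch_spec hC hNnode hdN hNd).2.1)
        have hsep2 : ∀ u ∈ ch C R N d, ∀ v ∈ ch C R N e, R i0 u v := by
          rcases ch_sep hR hC hNnode hdN heN hNd hNe hnede i0 with hs | hs
          · exact hs
          · exfalso
            exact lin_asymm (hR.2 i0) hd he hde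
              (hs d (ch_spec hC hNnode hdN hNd).2.1 e (ch_spec hC hNnode heN hNe).2.1)
        have hp1 : pos C R i0 N c < pos C R i0 N d :=
          pos_lt_of_sep hR hC hNnode hcN hdN hNc hNd hsep1
        have hp2 : pos C R i0 N d < pos C R i0 N e :=
          pos_lt_of_sep hR hC hNnode hdN heN hNd hNe hsep2
        have e1 : tau C R i0 hC c d = wnd C R hC N + (pos C R i0 N c + pos C R i0 N d + 1) := by
          unfold tau; rw [h2, if_neg hQ]
        have e2 : tau C R i0 hC d e = wnd C R hC N + (pos C R i0 N d + pos C R i0 N e + 1) := by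
          unfold tau; rw [h, if_neg hQ]
        have e3 : tau C R i0 hC c e = wnd C R hC N + (pos C R i0 N c + pos C R i0 N e + 1) := by
          unfold tau; rw [← hN, if_neg hQ]
        rw [e1, e2, e3]
        omega
      · -- nu c d ⊊ N : pos c = pos d, tau c e = tau d e
        obtain ⟨hch, _⟩ := hchd c d hcN hdN h2 hcdsub
        have e2 : tau C R i0 hC d e = wnd C R hC N + (pos C R i0 N d + pos C R i0 N e + 1) := by
          unfold tau; rw [h, if_neg hQ]
        have e3 : tau C R i0 hC c e = wnd C R hC N + (pos C R i0 N c + pos C R i0 N e + 1) := by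
          unfold tau; rw [← hN, if_neg hQ]
        have : pos C R i0 N c = pos C R i0 N d := pos_congr hch
        rw [e2, e3, this]
        omega

/-- Equal crossing times with the exterior, for points inside a clone (B). -/
lemma tau_clone_eq (hR : IsProfile C R) (hC : C.Finite) {i0 : Fin n} {W : Set α}
    (hW : W ∈ cloneSets C R) {a b x : α} (ha : a ∈ W) (hb : b ∈ W) (hx : x ∈ C)
    (hxW : x ∉ W) : tau C R i0 hC a x = tau C R i0 hC b x := by
  classical
  have haC : a ∈ C := hW.2.1 ha
  have hbC : b ∈ C := hW.2.1 hb
  have haxne : a ≠ x := fun h => hxW (h ▸ ha)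
  have hbxne : b ≠ x := fun h => hxW (h ▸ hb)
  have hsubW : ∀ P : Set α, IsNode C R P → x ∈ P → (a ∈ P ∨ b ∈ P) → W ⊆ P := by
    intro P hP hxP hab
    have hne : (P ∩ W).Nonempty := by
      rcases hab with h | h
      · exact ⟨a, h, ha⟩
      · exact ⟨b, h, hb⟩
    rcases node_or_subset hP hW hne with h | h
    · exact absurd (h hxP) hxW
    · exact h
  obtain ⟨hna, ham, hxma⟩ := nu_spec (R := R) hC haC hx
  obtain ⟨hnb, hbm, hxmb⟩ := nu_spec (R := R) hC hbC hx
  have hWa : W ⊆ nu C R a x := hsubW _ hna hxma (Or.inl ham)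
  have hWb : W ⊆ nu C R b x := hsubW _ hnb hxmb (Or.inr hbm)
  have heq : nu C R a x = nu C R b x := by
    apply Set.Subset.antisymm
    · exact nu_least hnb (hWb ha) hxmb
    · exact nu_least hna (hWa hb) hxma
  set N := nu C R a x with hN
  have hNnode : IsNode C R N := hna
  by_cases hQ : Qwit C R N
  · unfold tau
    rw [← hN, ← heq, if_pos hQ, if_pos hQ]
  · -- P-type: W ⊆ child of a = child of b
    have hWN : W ⊆ N := hWa
    have hWne : W ≠ N := by
      intro h
      rw [h] at hxW
      exact hxW hxma
    have hcha : W ⊆ ch C R N a := subset_child hC hNnode hQ hW hWN hWne a ha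
    have haN : a ∈ N := ham
    have hNa : N ≠ {a} := by
      intro h; rw [h] at hxma; exact haxne hxma.symm
    have hbch : b ∈ ch C R N a := hcha hb
    have hcheq : ch C R N b = ch C R N a := ch_eq_of_mem hC hNnode haN hNa hbch
    have hpos : pos C R i0 N a = pos C R i0 N b := pos_congr hcheq.symm
    unfold tau
    rw [← hN, ← heq, if_neg hQ, if_neg hQ, hpos]

end VB

section LemmaQ

variable {C : Set α} {n : ℕ} {R : Fin n → α → α → Prop}

/-- The Q-node lemma: a child-closed, reference-convex subset of a Q-type node is a clone. -/
lemma clone_of_child_union (hR : IsProfile C R) (hC : C.Finite) {i0 : Fin n} {N : Set α}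
    (hNnode : IsNode C R N) (hQ : Qwit C R N) {X : Set α} (hXne : X.Nonempty)
    (hXsub : X ⊆ N)
    (hXcl : ∀ z ∈ X, ch C R N z ⊆ X)
    (hXint : ∀ a ∈ X, ∀ b ∈ X, ∀ y ∈ C \ X, (R i0 a y ↔ R i0 b y)) :
    X ∈ cloneSets C R := by
  classical
  have hNC : N ⊆ C := hNnode.1.2.1
  have hNfin : N.Finite := hC.subset hNC
  obtain ⟨Y0, hY0, Z0, hZ0, hb0, hu0⟩ := hQ
  have hY0N : Y0 ⊆ N := by rw [← hu0]; exact Set.subset_union_left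
  have hZ0N : Z0 ⊆ N := by rw [← hu0]; exact Set.subset_union_right
  have hbig : ∀ x ∈ N, N ≠ {x} := by
    obtain ⟨u, hu1, hu2⟩ := hb0.1
    obtain ⟨v, hv1, hv2⟩ := hb0.2.1
    have hune : u ≠ v := fun h => hv2 (h ▸ hu2)
    have huN : u ∈ N := hY0N hu1
    have hvN : v ∈ N := hY0N hv1
    intro x hx h
    rw [h] at huN hvN
    exact hune (huN.trans hvN.symm)
  have hchspec := fun (x : α) (hx : x ∈ N) => ch_spec hC hNnode hx (hbig x hx)
  -- index machinery
  set P : α → ℕ := fun x => pos C R i0 N x with hP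
  set SF : Finset ℕ := hNfin.toFinset.image P with hSF
  set k : ℕ := SF.card with hk
  set f : ℕ → ℕ := fun p => (SF.filter (fun q => q < p)).card with hf
  set idx : α → ℕ := fun x => f (P x) with hidx
  have hPmem : ∀ x ∈ N, P x ∈ SF := by
    intro x hx
    rw [hSF]
    exact Finset.mem_image.2 ⟨x, hNfin.mem_toFinset.2 hx, rfl⟩
  have hfmono : ∀ p ∈ SF, ∀ q, p < q → f p < f q := by
    intro p hp q hpq
    apply Finset.card_lt_card
    constructor
    · intro z hz
      rw [Finset.mem_filter] at hz ⊢
      exact ⟨hz.1, by omega⟩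
    · intro hsub
      have := hsub (Finset.mem_filter.2 ⟨hp, hpq⟩)
      rw [Finset.mem_filter] at this
      omega
  have hflt : ∀ p ∈ SF, f p < k := by
    intro p hp
    rw [hk]
    apply Finset.card_lt_card
    constructor
    · exact Finset.filter_subset _ _
    · intro hsub
      have := hsub hp
      rw [Finset.mem_filter] at this
      omega
  have hfinj : ∀ p ∈ SF, ∀ q ∈ SF, f p = f q → p = q := by
    intro p hp q hq hpq
    rcases Nat.lt_trichotomy p q with h | h | h
    · have := hfmono p hp q h; omega
    · exact h
    · have := hfmono q hq p h; omega
  have hsurj : ∀ i, i < k → ∃ x ∈ N, idx x = i := by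
    intro i hi
    have := Finset.surj_on_of_inj_on_of_card_le (s := SF) (t := Finset.range k)
      (fun p _ => f p) (fun p hp => Finset.mem_range.2 (hflt p hp))
      (fun p q hp hq h => hfinj p hp q hq h) (by rw [Finset.card_range])
    obtain ⟨p, hp, hpf⟩ := this i (Finset.mem_range.2 hi)
    rw [hSF] at hp
    obtain ⟨x, hx, hxp⟩ := Finset.mem_image.1 hp
    refine ⟨x, hNfin.mem_toFinset.1 hx, ?_⟩
    show f (P x) = i
    rw [hxp]
    exact hpf.symm
  have hidx_lt : ∀ x ∈ N, idx x < k := fun x hx => hflt _ (hPmem x hx)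
  have hch_eq_of_idx : ∀ x ∈ N, ∀ y ∈ N, idx x = idx y → ch C R N x = ch C R N y := by
    intro x hx y hy hxy
    have : P x = P y := hfinj _ (hPmem x hx) _ (hPmem y hy) hxy
    exact ch_eq_of_pos_eq hR hC hNnode hx hy (hbig x hx) (hbig y hy) this
  have hidx_eq_of_ch : ∀ x y : α, ch C R N x = ch C R N y → idx x = idx y := by
    intro x y hch
    have : P x = P y := pos_congr hch
    rw [hidx]
    simp only
    rw [this]
  have hposlt : ∀ x ∈ N, ∀ y ∈ N, idx x < idx y → P x < P y := by
    intro x hx y hy h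
    rcases Nat.lt_trichotomy (P x) (P y) with h2 | h2 | h2
    · exact h2
    · exfalso; rw [hidx] at h; simp only at h; rw [h2] at h; omega
    · exfalso
      have := hfmono _ (hPmem y hy) _ h2
      rw [hidx] at h; simp only at h; omega
  have hsep : ∀ x ∈ N, ∀ y ∈ N, idx x < idx y →
      ∀ u ∈ ch C R N x, ∀ v ∈ ch C R N y, R i0 u v := by
    intro x hx y hy h
    have hplt := hposlt x hx y hy h
    have hchne : ch C R N x ≠ ch C R N y := by
      intro hcc
      have hcon : P x = P y := pos_congr hcc
      omega
    rcases ch_sep hR hC hNnode hx hy (hbig x hx) (hbig y hy) hchne i0 with hs | hs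
    · exact hs
    · exfalso
      have hcon : pos C R i0 N y < pos C R i0 N x :=
        pos_lt_of_sep hR hC hNnode hy hx (hbig y hy) (hbig x hx)
          (fun u hu v hv => hs v hv u hu)
      have e1 : P x = pos C R i0 N x := rfl
      have e2 : P y = pos C R i0 N y := rfl
      omega
  have hrel : ∀ x ∈ N, ∀ y ∈ N, idx x < idx y → R i0 x y := by
    intro x hx y hy h
    exact hsep x hx y hy h x (hchspec x hx).2.1 y (hchspec y hy).2.1
  -- union-of-children sets
  set Un : ℕ → ℕ → Set α := fun i j => {z | z ∈ N ∧ i ≤ idx z ∧ idx z ≤ j} with hUn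
  have hUnsub : ∀ i j, Un i j ⊆ N := fun i j z hz => hz.1
  have hUncl : ∀ i j, ∀ z ∈ Un i j, ch C R N z ⊆ Un i j := by
    intro i j z hz w hw
    have hzN : z ∈ N := hz.1
    have hwN : w ∈ N := (hchspec z hzN).2.2.1 hw
    have hcc : ch C R N w = ch C R N z := ch_eq_of_mem hC hNnode hzN (hbig z hzN) hw
    have hii := hidx_eq_of_ch w z hcc
    exact ⟨hwN, by rw [hii]; exact hz.2.1, by rw [hii]; exact hz.2.2⟩
  -- representation of child-closed convex sets as Un c d
  have hrepr : ∀ Y : Set α, Y.Nonempty → Y ⊆ N → (∀ z ∈ Y, ch C R N z ⊆ Y) →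
      (∀ a ∈ Y, ∀ b ∈ Y, ∀ y ∈ C \ Y, (R i0 a y ↔ R i0 b y)) →
      ∃ c d, c ≤ d ∧ d < k ∧ Y = Un c d := by
    intro Y hYne hYN hYcl hYint
    have hYfin : Y.Finite := hNfin.subset hYN
    set IY : Finset ℕ := hYfin.toFinset.image idx with hIY
    have hIYne : IY.Nonempty := by
      obtain ⟨y, hy⟩ := hYne
      exact ⟨idx y, Finset.mem_image.2 ⟨y, hYfin.mem_toFinset.2 hy, rfl⟩⟩
    obtain ⟨yc, hycY, hycidx⟩ := Finset.mem_image.1 (IY.min'_mem hIYne)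
    obtain ⟨yd, hydY, hydidx⟩ := Finset.mem_image.1 (IY.max'_mem hIYne)
    rw [Set.Finite.mem_toFinset] at hycY hydY
    refine ⟨IY.min' hIYne, IY.max' hIYne, IY.min'_le _ (IY.max'_mem hIYne), ?_, ?_⟩
    · rw [← hydidx]; exact hidx_lt yd (hYN hydY)
    apply Set.Subset.antisymm
    · intro z hz
      refine ⟨hYN hz, ?_, ?_⟩
      · exact IY.min'_le _ (Finset.mem_image.2 ⟨z, hYfin.mem_toFinset.2 hz, rfl⟩)
      · exact IY.le_max' _ (Finset.mem_image.2 ⟨z, hYfin.mem_toFinset.2 hz, rfl⟩)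
    · rintro z ⟨hzN, hz1, hz2⟩
      by_cases hzc : idx z = IY.min' hIYne
      · have hcc : ch C R N z = ch C R N yc :=
          hch_eq_of_idx z hzN yc (hYN hycY) (by rw [hzc, hycidx])
        exact hYcl yc hycY (by rw [← hcc]; exact (hchspec z hzN).2.1)
      by_cases hzd : idx z = IY.max' hIYne
      · have hcc : ch C R N z = ch C R N yd :=
          hch_eq_of_idx z hzN yd (hYN hydY) (by rw [hzd, hydidx])
        exact hYcl yd hydY (by rw [← hcc]; exact (hchspec z hzN).2.1)
      have h1 : R i0 yc z := hrel yc (hYN hycY) z hzN (by omega)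
      have h2 : R i0 z yd := hrel z hzN yd (hYN hydY) (by omega)
      by_contra hzY
      have hiff := hYint yc hycY yd hydY z ⟨hNC hzN, hzY⟩
      have h3 : R i0 yd z := hiff.1 h1
      exact lin_asymm (hR.2 i0) (hNC hzN) (hNC (hYN hydY)) h2 h3
  -- child-closedness of clones with a companion
  have hccl : ∀ Y D : Set α, Y ∈ cloneSets C R → D ∈ cloneSets C R → Y ⊆ N → D ⊆ N →
      Bowtie Y D → ((∀ z ∈ D, ch C R N z ⊆ D) ∨ Y ∪ D = N) →
      ∀ z ∈ Y, ch C R N z ⊆ Y := by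
    intro Y D hY hD hYN hDN hbYD hcomp z hzY
    have hzN : z ∈ N := hYN hzY
    have hB := hchspec z hzN
    rcases node_or_subset hB.1 hY ⟨z, hB.2.1, hzY⟩ with h | h
    · exact h
    · exfalso
      obtain ⟨w, hwY, hwD⟩ := hbYD.1
      have hwB : w ∈ ch C R N z := h hwY
      rcases hcomp with hDcl | hunion
      · have hcc : ch C R N w = ch C R N z := ch_eq_of_mem hC hNnode hzN (hbig z hzN) hwB
        have hchD : ch C R N z ⊆ D := hcc ▸ hDcl w hwD
        obtain ⟨v, hv1, hv2⟩ := hbYD.2.1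
        exact hv2 (hchD (h hv1))
      · rcases node_or_subset hB.1 hD ⟨w, hwB, hwD⟩ with h2 | h2
        · -- ch N z ⊆ D : then N = Y ∪ D ⊆ D, so Y \ D = ∅
          have hDN' : D = N := by
            apply Set.Subset.antisymm hDN
            rw [← hunion]
            intro u hu
            rcases hu with hu | hu
            · exact h2 (h hu)
            · exact hu
          obtain ⟨v, hv1, hv2⟩ := hbYD.2.1
          exact hv2 (by rw [hDN']; exact hYN hv1)
        · -- D ⊆ ch N z : then N = Y ∪ D ⊆ ch N z ≠ N
          apply hB.2.2.2.1
          apply Set.Subset.antisymm hB.2.2.1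
          intro u hu
          rw [← hunion] at hu
          rcases hu with hu | hu
          · exact h hu
          · exact h2 hu
  -- bowtie between Un sets gives index crossing
  have hbtx : ∀ a b c d : ℕ, Bowtie (Un a b) (Un c d) →
      (a < c ∧ c ≤ b ∧ b < d) ∨ (c < a ∧ a ≤ d ∧ d < b) := by
    intro a b c d hbt
    obtain ⟨z1, hz1a, hz1c⟩ := hbt.1
    obtain ⟨z2, hz2a, hz2c⟩ := hbt.2.1
    obtain ⟨z3, hz3c, hz3a⟩ := hbt.2.2
    obtain ⟨hz1N, h1a, h1b⟩ := hz1a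
    obtain ⟨_, h1c, h1d⟩ := hz1c
    obtain ⟨hz2N, h2a, h2b⟩ := hz2a
    obtain ⟨hz3N, h3c, h3d⟩ := hz3c
    have h2cd : idx z2 < c ∨ d < idx z2 := by
      by_contra hcon
      push_neg at hcon
      exact hz2c ⟨hz2N, by omega, by omega⟩
    have h3ab : idx z3 < a ∨ b < idx z3 := by
      by_contra hcon
      push_neg at hcon
      exact hz3a ⟨hz3N, by omega, by omega⟩
    omega
  -- the abstract family
  set T : Set (ℕ × ℕ) := {p | p.1 ≤ p.2 ∧ p.2 < k ∧ Un p.1 p.2 ∈ cloneSets C R} with hT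
  have hk0 : 0 < k := by
    obtain ⟨u, hu1, _⟩ := hb0.1
    exact lt_of_le_of_lt (Nat.zero_le _) (hidx_lt u (hY0N hu1))
  have habs : AbsHyp k T := by
    constructor
    · exact fun p hp => ⟨hp.1, hp.2.1⟩
    · -- singletons
      intro i hi
      obtain ⟨x, hxN, hxi⟩ := hsurj i hi
      have heq : Un i i = ch C R N x := by
        apply Set.Subset.antisymm
        · rintro z ⟨hzN, hz1, hz2⟩
          have : idx z = idx x := by omega
          have hcc := hch_eq_of_idx z hzN x hxN this
          rw [← hcc]
          exact (hchspec z hzN).2.1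
        · intro z hz
          have hzN : z ∈ N := (hchspec x hxN).2.2.1 hz
          have hcc : ch C R N z = ch C R N x := ch_eq_of_mem hC hNnode hxN (hbig x hxN) hz
          have := hidx_eq_of_ch z x hcc
          exact ⟨hzN, by omega, by omega⟩
      exact ⟨le_refl _, hi, by rw [heq]; exact (hchspec x hxN).1.1⟩
    · -- full
      refine ⟨Nat.zero_le _, by omega, ?_⟩
      have heq : Un 0 (k-1) = N := by
        apply Set.Subset.antisymm (hUnsub _ _)
        intro z hz
        have := hidx_lt z hz
        exact ⟨hz, Nat.zero_le _, by omega⟩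
      rw [heq]
      exact hNnode.1
    · -- inter
      rintro p ⟨hp1, hp2, hp3⟩ q ⟨hq1, hq2, hq3⟩ hover
      have heq : Un p.1 p.2 ∩ Un q.1 q.2 = Un (max p.1 q.1) (min p.2 q.2) := by
        ext z
        constructor
        · rintro ⟨⟨hzN, ha, hb⟩, ⟨_, hc, hd⟩⟩
          exact ⟨hzN, by omega, by omega⟩
        · rintro ⟨hzN, ha, hb⟩
          exact ⟨⟨hzN, by omega, by omega⟩, ⟨hzN, by omega, by omega⟩⟩
      obtain ⟨x, hxN, hxi⟩ := hsurj (max p.1 q.1) (by omega)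
      have hne : (Un p.1 p.2 ∩ Un q.1 q.2).Nonempty := by
        rw [heq]
        exact ⟨x, hxN, by omega, by omega⟩
      exact ⟨by omega, by omega, by rw [← heq]; exact clone_inter hp3 hq3 hne⟩
    · -- union
      rintro p ⟨hp1, hp2, hp3⟩ q ⟨hq1, hq2, hq3⟩ hover
      have heq : Un p.1 p.2 ∪ Un q.1 q.2 = Un (min p.1 q.1) (max p.2 q.2) := by
        ext z
        constructor
        · rintro (⟨hzN, ha, hb⟩ | ⟨hzN, ha, hb⟩)
          · exact ⟨hzN, by omega, by omega⟩
          · exact ⟨hzN, by omega, by omega⟩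
        · rintro ⟨hzN, ha, hb⟩
          rcases le_or_gt (idx z) p.2 with h | h
          · rcases le_or_gt p.1 (idx z) with h2 | h2
            · exact Or.inl ⟨hzN, h2, h⟩
            · exact Or.inr ⟨hzN, by omega, by omega⟩
          · exact Or.inr ⟨hzN, by omega, by omega⟩
      obtain ⟨x, hxN, hxi⟩ := hsurj (max p.1 q.1) (by omega)
      have hne : (Un p.1 p.2 ∩ Un q.1 q.2).Nonempty :=
        ⟨x, ⟨hxN, by omega, by omega⟩, ⟨hxN, by omega, by omega⟩⟩
      exact ⟨by omega, by omega, by rw [← heq]; exact clone_union hp3 hq3 hne⟩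
    · -- diff
      rintro p ⟨hp1, hp2, hp3⟩ q ⟨hq1, hq2, hq3⟩ h1 h2 h3
      obtain ⟨w1, hw1N, hw1i⟩ := hsurj q.1 (by omega)
      obtain ⟨w2, hw2N, hw2i⟩ := hsurj p.1 (by omega)
      obtain ⟨w3, hw3N, hw3i⟩ := hsurj q.2 (by omega)
      have hbt : Bowtie (Un p.1 p.2) (Un q.1 q.2) := by
        refine ⟨⟨w1, ⟨hw1N, by omega, by omega⟩, ⟨hw1N, by omega, by omega⟩⟩, ?_, ?_⟩
        · refine ⟨w2, ⟨hw2N, by omega, by omega⟩, ?_⟩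
          rintro ⟨_, hc, _⟩
          omega
        · refine ⟨w3, ⟨hw3N, by omega, by omega⟩, ?_⟩
          rintro ⟨_, _, hd⟩
          omega
      have heq1 : Un p.1 p.2 \ Un q.1 q.2 = Un p.1 (q.1 - 1) := by
        ext z
        constructor
        · rintro ⟨⟨hzN, ha, hb⟩, hnot⟩
          have : ¬ (q.1 ≤ idx z ∧ idx z ≤ q.2) := fun hh => hnot ⟨hzN, hh.1, hh.2⟩
          exact ⟨hzN, ha, by omega⟩
        · rintro ⟨hzN, ha, hb⟩
          refine ⟨⟨hzN, ha, by omega⟩, ?_⟩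
          rintro ⟨_, hc, _⟩
          omega
      have heq2 : Un q.1 q.2 \ Un p.1 p.2 = Un (p.2 + 1) q.2 := by
        ext z
        constructor
        · rintro ⟨⟨hzN, ha, hb⟩, hnot⟩
          have : ¬ (p.1 ≤ idx z ∧ idx z ≤ p.2) := fun hh => hnot ⟨hzN, hh.1, hh.2⟩
          exact ⟨hzN, by omega, hb⟩
        · rintro ⟨hzN, ha, hb⟩
          refine ⟨⟨hzN, by omega, hb⟩, ?_⟩
          rintro ⟨_, _, hd⟩
          omega
      constructor
      · exact ⟨by omega, by omega, by rw [← heq1]; exact clone_diff hR hp3 hq3 hbt⟩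
      · have hbt' : Bowtie (Un q.1 q.2) (Un p.1 p.2) := by
          obtain ⟨hi, hd1, hd2⟩ := hbt
          exact ⟨by rwa [Set.inter_comm], hd2, hd1⟩
        exact ⟨by omega, by omega, by rw [← heq2]; exact clone_diff hR hq3 hp3 hbt'⟩
    · -- part
      rintro p ⟨hp1, hp2, hp3⟩ hlt hne
      obtain ⟨xa, hxaN, hxai⟩ := hsurj p.1 (by omega)
      obtain ⟨xb, hxbN, hxbi⟩ := hsurj p.2 (by omega)
      have hxaW : xa ∈ Un p.1 p.2 := ⟨hxaN, by omega, by omega⟩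
      have hxbW : xb ∈ Un p.1 p.2 := ⟨hxbN, by omega, by omega⟩
      have hWne : Un p.1 p.2 ≠ N := by
        have hout : 0 < p.1 ∨ p.2 + 1 < k := by
          by_contra hcon
          push_neg at hcon
          apply hne
          have : p.1 = 0 := by omega
          have : p.2 = k - 1 := by omega
          exact Prod.ext (by omega) (by omega)
        rcases hout with hout | hout
        · obtain ⟨x0, hx0N, hx0i⟩ := hsurj 0 hk0
          intro hcon
          have : x0 ∈ Un p.1 p.2 := by rw [hcon]; exact hx0N
          obtain ⟨_, ha, _⟩ := this
          omega
        · obtain ⟨x0, hx0N, hx0i⟩ := hsurj (p.2 + 1) hout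
          intro hcon
          have : x0 ∈ Un p.1 p.2 := by rw [hcon]; exact hx0N
          obtain ⟨_, _, hb⟩ := this
          omega
      have hWnotnode : ¬ IsNode C R (Un p.1 p.2) := by
        intro hnode
        have hsub : Un p.1 p.2 ⊆ ch C R N xa :=
          (hchspec xa hxaN).2.2.2.2 _ hnode hxaW (hUnsub _ _) hWne
        have hcc : ch C R N xb = ch C R N xa :=
          ch_eq_of_mem hC hNnode hxaN (hbig xa hxaN) (hsub hxbW)
        have := hidx_eq_of_ch xb xa hcc
        omega
      have hex : ∃ Y ∈ cloneSets C R, Bowtie (Un p.1 p.2) Y := by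
        by_contra hcon
        push_neg at hcon
        exact hWnotnode ⟨hp3, hcon⟩
      obtain ⟨Y, hY, hbt⟩ := hex
      have hYN : Y ⊆ N := by
        obtain ⟨w, hw1, hw2⟩ := hbt.1
        rcases node_or_subset hNnode hY ⟨w, (hUnsub _ _) hw1, hw2⟩ with h | h
        · exfalso
          obtain ⟨v, hv1, hv2⟩ := hbt.2.1
          exact hv2 (h ((hUnsub _ _) hv1))
        · exact h
      have hbtY : Bowtie Y (Un p.1 p.2) := by
        obtain ⟨hi, hd1, hd2⟩ := hbt
        exact ⟨by rwa [Set.inter_comm], hd2, hd1⟩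
      have hYcl : ∀ z ∈ Y, ch C R N z ⊆ Y :=
        hccl Y (Un p.1 p.2) hY hp3 hYN (hUnsub _ _) hbtY (Or.inl (hUncl _ _))
      have hYne2 : Y.Nonempty := hY.1
      have hYint : ∀ a ∈ Y, ∀ b ∈ Y, ∀ y ∈ C \ Y, (R i0 a y ↔ R i0 b y) :=
        fun a ha b hb y hy => hY.2.2 a ha b hb y hy i0
      obtain ⟨c, d, hcd, hdk, hYeq⟩ := hrepr Y hYne2 hYN hYcl hYint
      rw [hYeq] at hbt
      have hcr := hbtx p.1 p.2 c d hbt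
      exact ⟨(c, d), ⟨hcd, hdk, by rw [← hYeq]; exact hY⟩, hcr⟩
  -- (W) witness and application of the abstract theorem
  have hY0cl : ∀ z ∈ Y0, ch C R N z ⊆ Y0 :=
    hccl Y0 Z0 hY0 hZ0 hY0N hZ0N hb0 (Or.inr hu0)
  have hb0' : Bowtie Z0 Y0 := by
    obtain ⟨hi, hd1, hd2⟩ := hb0
    exact ⟨by rwa [Set.inter_comm], hd2, hd1⟩
  have hZ0cl : ∀ z ∈ Z0, ch C R N z ⊆ Z0 :=
    hccl Z0 Y0 hZ0 hY0 hZ0N hY0N hb0' (Or.inr (by rw [Set.union_comm]; exact hu0))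
  obtain ⟨c, d, hcd, hdk, hYeq⟩ := hrepr Y0 hY0.1 hY0N hY0cl
    (fun a ha b hb y hy => hY0.2.2 a ha b hb y hy i0)
  obtain ⟨e, g, heg, hgk, hZeq⟩ := hrepr Z0 hZ0.1 hZ0N hZ0cl
    (fun a ha b hb y hy => hZ0.2.2 a ha b hb y hy i0)
  have hbt2 : Bowtie (Un c d) (Un e g) := by rw [← hYeq, ← hZeq]; exact hb0
  have hcov : Un c d ∪ Un e g = N := by rw [← hYeq, ← hZeq]; exact hu0
  have hcr := hbtx c d e g hbt2
  have hall : ∀ a b, a ≤ b → b < k → (a, b) ∈ T := by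
    have hYT : (c, d) ∈ T := ⟨hcd, hdk, by rw [← hYeq]; exact hY0⟩
    have hZT : (e, g) ∈ T := ⟨heg, hgk, by rw [← hZeq]; exact hZ0⟩
    obtain ⟨x0, hx0N, hx0i⟩ := hsurj 0 hk0
    obtain ⟨xk, hxkN, hxki⟩ := hsurj (k - 1) (by omega)
    have hx0mem : x0 ∈ Un c d ∪ Un e g := by rw [hcov]; exact hx0N
    have hxkmem : xk ∈ Un c d ∪ Un e g := by rw [hcov]; exact hxkN
    rcases hcr with ⟨h1, h2, h3⟩ | ⟨h1, h2, h3⟩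
    · -- c < e ≤ d < g : c = 0, g = k - 1
      have hc0 : c = 0 := by
        rcases hx0mem with ⟨_, ha, _⟩ | ⟨_, ha, _⟩ <;> omega
      have hgk1 : g = k - 1 := by
        rcases hxkmem with ⟨_, _, hb⟩ | ⟨_, _, hb⟩ <;> omega
      exact abs_all habs hYT hZT ⟨h1, h2, h3⟩ ⟨hc0, hgk1⟩
    · -- e < c ≤ g < d : e = 0, d = k - 1
      have he0 : e = 0 := by
        rcases hx0mem with ⟨_, ha, _⟩ | ⟨_, ha, _⟩ <;> omega
      have hdk1 : d = k - 1 := by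
        rcases hxkmem with ⟨_, _, hb⟩ | ⟨_, _, hb⟩ <;> omega
      exact abs_all habs hZT hYT ⟨h1, h2, h3⟩ ⟨he0, hdk1⟩
  -- conclude for X
  obtain ⟨cX, dX, hcdX, hdkX, hXeq⟩ := hrepr X hXne hXsub hXcl hXint
  have := hall cX dX hcdX hdkX
  rw [hXeq]
  exact this.2.2

end LemmaQ

section SLemma

variable {C : Set α} {n : ℕ} {R : Fin n → α → α → Prop}

/-- (S): a set that is convex for the reference order and has constant crossing
times with the exterior is a clone. -/
lemma clone_of_unbroken (hR : IsProfile C R) (hC : C.Finite) {i0 : Fin n} {X : Set α}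
    (hXne : X.Nonempty) (hXC : X ⊆ C)
    (hXint : ∀ a ∈ X, ∀ b ∈ X, ∀ y ∈ C \ X, (R i0 a y ↔ R i0 b y))
    (hXtau : ∀ a ∈ X, ∀ b ∈ X, ∀ y ∈ C \ X,
      tau C R i0 hC a y = tau C R i0 hC b y) :
    X ∈ cloneSets C R := by
  classical
  obtain ⟨x0, hx0⟩ := hXne
  by_cases hsing : ∀ z ∈ X, z = x0
  · have : X = {x0} := by
      apply Set.Subset.antisymm
      · intro z hz; exact hsing z hz
      · rintro z rfl; exact hx0
    rw [this]
    exact clone_singleton hR (hXC hx0)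
  push_neg at hsing
  obtain ⟨x1, hx1, hx1ne⟩ := hsing
  obtain ⟨hNnode, hXN⟩ := nuS_spec (R := R) hC ⟨x0, hx0⟩ hXC
  set N : Set α := nuS C R X with hNdef
  by_cases hNX : N ⊆ X
  · have : X = N := Set.Subset.antisymm hXN hNX
    rw [this]
    exact hNnode.1
  obtain ⟨y, hyN, hyX⟩ := Set.not_subset.1 hNX
  have hNC : N ⊆ C := hNnode.1.2.1
  have hnuN : ∀ y' ∈ N, y' ∉ X → ∀ a ∈ X, nu C R a y' = N := by
    intro y' hy'N hy'X a ha
    have hy'C : y' ∈ C := hNC hy'N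
    have hnueq : ∀ b ∈ X, nu C R b y' = nu C R a y' := by
      intro b hb
      by_cases hab : b = a
      · rw [hab]
      · exact tau_eq_nu hC (hXC hb) hy'C (hXC ha) hy'C
          (hXtau b hb a ha y' ⟨hy'C, hy'X⟩)
    have hXsub : X ⊆ nu C R a y' := by
      intro b hb
      rw [← hnueq b hb]
      exact (nu_spec (R := R) hC (hXC hb) hy'C).2.1
    apply Set.Subset.antisymm
    · exact nu_least hNnode (hXN ha) hy'N
    · exact nuS_least (nu_spec (R := R) hC (hXC ha) hy'C).1 hXsub
  have hNbig : ∀ z ∈ X, N ≠ {z} := by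
    intro z hz h
    rw [h] at hyN
    rw [hyN] at hyX
    exact hyX hz
  by_cases hQ : Qwit C R N
  · have hXcl : ∀ z ∈ X, ch C R N z ⊆ X := by
      intro z hz w hw
      by_contra hwX
      have hzN : z ∈ N := hXN hz
      have hsp := ch_spec hC hNnode hzN (hNbig z hz)
      have hwN : w ∈ N := hsp.2.2.1 hw
      have hnuw := hnuN w hwN hwX z hz
      have hsub : nu C R z w ⊆ ch C R N z := nu_least hsp.1 hsp.2.1 hw
      rw [hnuw] at hsub
      exact hsp.2.2.2.1 (Set.Subset.antisymm hsp.2.2.1 hsub)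
    exact clone_of_child_union hR hC hNnode hQ ⟨x0, hx0⟩ hXN hXcl hXint
  · exfalso
    have hpos : ∀ a ∈ X, ∀ b ∈ X, ch C R N a = ch C R N b := by
      intro a ha b hb
      by_cases hab : a = b
      · rw [hab]
      have hyC : y ∈ C := hNC hyN
      have htau := hXtau a ha b hb y ⟨hyC, hyX⟩
      have hnua := hnuN y hyN hyX a ha
      have hnub := hnuN y hyN hyX b hb
      have hposeq : pos C R i0 N a = pos C R i0 N b := by
        unfold tau at htau
        rw [hnua, hnub, if_neg hQ, if_neg hQ] at htau
        omega
      exact ch_eq_of_pos_eq hR hC hNnode (hXN ha) (hXN hb) (hNbig a ha) (hNbig b hb) hposeq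
    have hsp := ch_spec hC hNnode (hXN hx0) (hNbig x0 hx0)
    have hXch : X ⊆ ch C R N x0 := by
      intro b hb
      have hpb := hpos b hb x0 hx0
      rw [← hpb]
      exact (ch_spec hC hNnode (hXN hb) (hNbig b hb)).2.1
    have hsub2 : N ⊆ ch C R N x0 := nuS_least hsp.1 hXch
    exact hsp.2.2.2.1 (Set.Subset.antisymm hsp.2.2.1 hsub2)

end SLemma

section Assembly

variable {C : Set α} {n : ℕ} {R : Fin n → α → α → Prop}

lemma exists_sc (hR : IsProfile C R) (hC : C.Finite) :
    ∃ (m : ℕ) (Q : Fin m → α → α → Prop),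
      IsProfile C Q ∧ SingleCrossing C Q ∧ cloneSets C R = cloneSets C Q := by
  classical
  set i0 : Fin n := ⟨0, hR.1⟩ with hi0
  have hlin := hR.2 i0
  set B : ℕ := (2 * C.ncard + 2) * (nodeList C R hC).length with hB
  set Q : Fin (B + 1) → α → α → Prop := fun t c d =>
    c ∈ C ∧ d ∈ C ∧ ((R i0 c d ∧ ¬ (tau C R i0 hC c d ≤ (t : ℕ))) ∨
      (R i0 d c ∧ tau C R i0 hC c d ≤ (t : ℕ))) with hQdef
  have hasym : ∀ {a b : α}, a ∈ C → b ∈ C → R i0 a b → ¬ R i0 b a :=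
    fun ha hb h => lin_asymm hlin ha hb h
  have hcomm : ∀ a b : α, tau C R i0 hC a b = tau C R i0 hC b a :=
    fun a b => tau_comm hC a b
  -- transitivity of each voter
  have hQtrans : ∀ t : Fin (B+1), ∀ a ∈ C, ∀ b ∈ C, ∀ c ∈ C,
      Q t a b → Q t b c → Q t a c := by
    intro t a ha b hb c hc hab hbc
    have hne_ab : a ≠ b := by
      rintro rfl
      rcases hab.2.2 with ⟨h1, _⟩ | ⟨h1, _⟩ <;> exact hlin.1 a ha h1
    have hne_bc : b ≠ c := by
      rintro rfl
      rcases hbc.2.2 with ⟨h1, _⟩ | ⟨h1, _⟩ <;> exact hlin.1 b hb h1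
    have hne_ac : a ≠ c := by
      rintro rfl
      rcases hab.2.2 with ⟨h1, h2⟩ | ⟨h1, h2⟩ <;> rcases hbc.2.2 with ⟨h3, h4⟩ | ⟨h3, h4⟩
      · exact hasym ha hb h1 h3
      · rw [hcomm b a] at h4; exact h2 h4
      · rw [hcomm a b] at h2; exact h4 h2
      · exact hasym ha hb h3 h1
    rcases hab.2.2 with ⟨rab, fab⟩ | ⟨rba, fab⟩ <;> rcases hbc.2.2 with ⟨rbc, fbc⟩ | ⟨rcb, fbc⟩
    · -- R a b, R b c, neither flipped
      have rac := hlin.2.1 a ha b hb c hc rab rbc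
      have hbtw := (tau_btw hR hC ha hb hc rab rbc).1
      refine ⟨ha, hc, Or.inl ⟨rac, ?_⟩⟩
      intro hle
      rcases min_le_iff.1 hbtw with h | h <;> omega
    · -- R a b unflipped, R c b flipped
      rcases hlin.2.2 a ha c hc hne_ac with rac | rca
      · -- a before c before b in reference
        have hbtw := (tau_btw hR hC ha hc hb rac rcb).2
        have fcb : tau C R i0 hC c b ≤ (t : ℕ) := by rw [hcomm c b]; exact fbc
        refine ⟨ha, hc, Or.inl ⟨rac, ?_⟩⟩
        intro hle
        rcases le_max_iff.1 hbtw with h | h <;> omega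
      · -- c before a before b
        have hbtw := (tau_btw hR hC hc ha hb rca rab).1
        have fcb : tau C R i0 hC c b ≤ (t : ℕ) := by rw [hcomm c b]; exact fbc
        refine ⟨ha, hc, Or.inr ⟨rca, ?_⟩⟩
        rw [hcomm a c]
        rcases min_le_iff.1 hbtw with h | h <;> omega
    · -- R b a flipped, R b c unflipped
      have fba : tau C R i0 hC b a ≤ (t : ℕ) := by rw [hcomm b a]; exact fab
      rcases hlin.2.2 a ha c hc hne_ac with rac | rca
      · have hbtw := (tau_btw hR hC hb ha hc rba rac).2
        refine ⟨ha, hc, Or.inl ⟨rac, ?_⟩⟩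
        intro hle
        rcases le_max_iff.1 hbtw with h | h <;> omega
      · have hbtw := (tau_btw hR hC hb hc ha rbc rca).1
        refine ⟨ha, hc, Or.inr ⟨rca, ?_⟩⟩
        rw [hcomm a c]
        rcases min_le_iff.1 hbtw with h | h <;> omega
    · -- both flipped: R b a, R c b
      have rca := hlin.2.1 c hc b hb a ha rcb rba
      have fba : tau C R i0 hC b a ≤ (t : ℕ) := by rw [hcomm b a]; exact fab
      have fcb : tau C R i0 hC c b ≤ (t : ℕ) := by rw [hcomm c b]; exact fbc
      have hbtw := (tau_btw hR hC hc hb ha rcb rba).2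
      refine ⟨ha, hc, Or.inr ⟨rca, ?_⟩⟩
      rw [hcomm a c]
      calc tau C R i0 hC c a ≤ max (tau C R i0 hC c b) (tau C R i0 hC b a) := hbtw
        _ ≤ (t : ℕ) := max_le fcb fba
  have hQlin : ∀ t, IsLinOn C (Q t) := by
    intro t
    refine ⟨?_, ?_, ?_⟩
    · intro a ha h
      rcases h.2.2 with ⟨h1, _⟩ | ⟨h1, _⟩ <;> exact hlin.1 a ha h1
    · exact fun a ha b hb c hc => hQtrans t a ha b hb c hc
    · intro a ha b hb hne
      rcases hlin.2.2 a ha b hb hne with h | h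
      · by_cases hf : tau C R i0 hC a b ≤ (t : ℕ)
        · exact Or.inr ⟨hb, ha, Or.inr ⟨h, by rw [hcomm b a]; exact hf⟩⟩
        · exact Or.inl ⟨ha, hb, Or.inl ⟨h, hf⟩⟩
      · by_cases hf : tau C R i0 hC a b ≤ (t : ℕ)
        · exact Or.inl ⟨ha, hb, Or.inr ⟨h, hf⟩⟩
        · exact Or.inr ⟨hb, ha, Or.inl ⟨h, by rw [hcomm b a]; exact hf⟩⟩
  -- the interval property transfers through voter 0
  have hXint_of : ∀ X : Set α, X ∈ cloneSets C Q →
      ∀ a ∈ X, ∀ b ∈ X, ∀ y ∈ C \ X, (R i0 a y ↔ R i0 b y) := by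
    intro X hX a haX b hbX y hyCX
    have haC := hX.2.1 haX
    have hbC := hX.2.1 hbX
    have hay : a ≠ y := fun h => hyCX.2 (h ▸ haX)
    have hby : b ≠ y := fun h => hyCX.2 (h ▸ hbX)
    have h0 := hX.2.2 a haX b hbX y hyCX ⟨0, by omega⟩
    have hta := tau_pos (R := R) (i0 := i0) hC a y
    have htb := tau_pos (R := R) (i0 := i0) hC b y
    constructor
    · intro hray
      have hQa : Q ⟨0, by omega⟩ a y := ⟨haC, hyCX.1, Or.inl ⟨hray, by simp; omega⟩⟩
      have hQb := h0.1 hQa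
      rcases hQb.2.2 with ⟨h1, _⟩ | ⟨_, h2⟩
      · exact h1
      · exfalso; simp at h2; omega
    · intro hrby
      have hQb : Q ⟨0, by omega⟩ b y := ⟨hbC, hyCX.1, Or.inl ⟨hrby, by simp; omega⟩⟩
      have hQa := h0.2 hQb
      rcases hQa.2.2 with ⟨h1, _⟩ | ⟨_, h2⟩
      · exact h1
      · exfalso; simp at h2; omega
  refine ⟨B + 1, Q, ⟨Nat.succ_pos B, hQlin⟩, ?_, ?_⟩
  · -- single-crossing
    refine ⟨fun i j => i < j, ⟨fun a _ h => lt_irrefl a h,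
      fun a _ b _ c _ h1 h2 => lt_trans h1 h2,
      fun a _ b _ hab => lt_or_gt_of_ne hab⟩, ?_⟩
    intro c hc d hd hne
    rcases hlin.2.2 c hc d hd hne with h | h
    · left
      intro i j hicd hjdc
      have h1 : ¬ (tau C R i0 hC c d ≤ (i : ℕ)) := by
        rcases hicd.2.2 with ⟨_, hf⟩ | ⟨hdc, _⟩
        · exact hf
        · exact absurd hdc (hasym hc hd h)
      have h2 : tau C R i0 hC c d ≤ (j : ℕ) := by
        rcases hjdc.2.2 with ⟨hdc, _⟩ | ⟨_, hf⟩
        · exact absurd hdc (hasym hc hd h)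
        · rw [hcomm c d]; exact hf
      exact Fin.lt_def.2 (by omega)
    · right
      intro i j hidc hjcd
      have h1 : ¬ (tau C R i0 hC d c ≤ (i : ℕ)) := by
        rcases hidc.2.2 with ⟨_, hf⟩ | ⟨hcd, _⟩
        · exact hf
        · exact absurd hcd (hasym hd hc h)
      have h2 : tau C R i0 hC d c ≤ (j : ℕ) := by
        rcases hjcd.2.2 with ⟨hcd, _⟩ | ⟨_, hf⟩
        · exact absurd hcd (hasym hd hc h)
        · rw [hcomm d c]; exact hf
      exact Fin.lt_def.2 (by omega)
  · -- equality of clone structures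
    ext X
    constructor
    · intro hX
      refine ⟨hX.1, hX.2.1, ?_⟩
      intro c hcX c' hc'X a haCX t
      have hcC := hX.2.1 hcX
      have hc'C := hX.2.1 hc'X
      have hiff := hX.2.2 c hcX c' hc'X a haCX i0
      have htau : tau C R i0 hC c a = tau C R i0 hC c' a :=
        tau_clone_eq hR hC hX hcX hc'X haCX.1 haCX.2
      have hca : c ≠ a := fun h => haCX.2 (h ▸ hcX)
      have hc'a : c' ≠ a := fun h => haCX.2 (h ▸ hc'X)
      rcases hlin.2.2 c hcC a haCX.1 hca with h | h
      · have h' : R i0 c' a := hiff.1 h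
        constructor
        · intro hq
          rcases hq.2.2 with ⟨_, hf⟩ | ⟨hac, _⟩
          · exact ⟨hc'C, haCX.1, Or.inl ⟨h', by rwa [← htau]⟩⟩
          · exact absurd hac (hasym hcC haCX.1 h)
        · intro hq
          rcases hq.2.2 with ⟨_, hf⟩ | ⟨hac, _⟩
          · exact ⟨hcC, haCX.1, Or.inl ⟨h, by rwa [htau]⟩⟩
          · exact absurd hac (hasym hc'C haCX.1 h')
      · have hnc : ¬ R i0 c a := fun hcon => hasym haCX.1 hcC h hcon
        have hnc' : ¬ R i0 c' a := fun hcon => hnc (hiff.2 hcon)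
        have h' : R i0 a c' := by
          rcases hlin.2.2 a haCX.1 c' hc'C (Ne.symm hc'a) with hh | hh
          · exact hh
          · exact absurd hh hnc'
        constructor
        · intro hq
          rcases hq.2.2 with ⟨hca', _⟩ | ⟨_, hf⟩
          · exact absurd hca' hnc
          · exact ⟨hc'C, haCX.1, Or.inr ⟨h', by rwa [← htau]⟩⟩
        · intro hq
          rcases hq.2.2 with ⟨hca', _⟩ | ⟨_, hf⟩
          · exact absurd hca' hnc'
          · exact ⟨hcC, haCX.1, Or.inr ⟨h, by rwa [htau]⟩⟩
    · intro hX
      have hXint := hXint_of X hX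
      apply clone_of_unbroken hR hC (i0 := i0) hX.1 hX.2.1 hXint
      intro a haX b hbX y hyCX
      by_contra hnetau
      have hkey : ∀ a' ∈ X, ∀ b' ∈ X, tau C R i0 hC a' y < tau C R i0 hC b' y → False := by
        intro a' ha'X b' hb'X hlt
        have ha'C := hX.2.1 ha'X
        have hb'C := hX.2.1 hb'X
        have ha'y : a' ≠ y := fun h => hyCX.2 (h ▸ ha'X)
        have hb'y : b' ≠ y := fun h => hyCX.2 (h ▸ hb'X)
        have hbd : tau C R i0 hC a' y ≤ B := tau_bound hC ha'C hyCX.1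
        set t : Fin (B + 1) := ⟨tau C R i0 hC a' y, by omega⟩ with ht
        have hiff := hX.2.2 a' ha'X b' hb'X y hyCX t
        have hint := hXint a' ha'X b' hb'X y hyCX
        have htval : (t : ℕ) = tau C R i0 hC a' y := rfl
        rcases hlin.2.2 a' ha'C y hyCX.1 ha'y with hray | hrya
        · have hrby : R i0 b' y := hint.1 hray
          have hQa : ¬ Q t a' y := by
            intro hq
            rcases hq.2.2 with ⟨_, hf⟩ | ⟨hya', _⟩
            · exact hf (by omega)
            · exact hasym ha'C hyCX.1 hray hya'
          have hQb : Q t b' y := ⟨hb'C, hyCX.1, Or.inl ⟨hrby, by omega⟩⟩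
          exact hQa (hiff.2 hQb)
        · have hnra : ¬ R i0 a' y := fun hcon => hasym hyCX.1 ha'C hrya hcon
          have hnrb : ¬ R i0 b' y := fun hcon => hnra (hint.2 hcon)
          have hryb : R i0 y b' := by
            rcases hlin.2.2 y hyCX.1 b' hb'C (Ne.symm hb'y) with hh | hh
            · exact hh
            · exact absurd hh hnrb
          have hQa : Q t a' y := ⟨ha'C, hyCX.1, Or.inr ⟨hrya, by omega⟩⟩
          have hQb : ¬ Q t b' y := by
            intro hq
            rcases hq.2.2 with ⟨hrb, _⟩ | ⟨_, hf⟩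
            · exact absurd hrb hnrb
            · omega
          exact hQb (hiff.1 hQa)
      rcases Nat.lt_trichotomy (tau C R i0 hC a y) (tau C R i0 hC b y) with h | h | h
      · exact hkey a haX b hbX h
      · exact hnetau h
      · exact hkey b hbX a haX h

end Assembly


end CloneSC

theorem clone_structure_single_crossing_implementable (C : Set α) (hC : C.Finite)
    (𝓒 : Set (Set α)) (h : IsCloneStructure C 𝓒) :
    ∃ (n : ℕ) (R : Fin n → α → α → Prop),
      IsProfile C R ∧ SingleCrossing C R ∧ 𝓒 = cloneSets C R := by
  obtain ⟨n, R, hR, rfl⟩ := h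
  obtain ⟨m, Q, hQprof, hQsc, heq⟩ := CloneSC.exists_sc hR hC
  exact ⟨m, Q, hQprof, hQsc, heq⟩
end
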